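/- arXiv:2103.02283 — 4 statements merged into one kernel-verified Lean document; each statement's English description precedes it below -/
import Mathlib

section
/- For every even integer m ≥ 4 there exists a simple line arrangement L of m + 1 lines whose arrangement graph G_L has exactly m vertices of degree 2, exactly 2 vertices of degree 3, and exactly (m+1)(m−2)/2 − 1 vertices of degree 4 (obtained from a star construction on m + 1 lines by one pull operation). -/
/-- A line in the Euclidean plane `ℝ × ℝ`, given by an affine equation. -/
def IsLine (l : Set (ℝ × ℝ)) : Prop :=
  ∃ a b c : ℝ, (a, b) ≠ (0, 0) ∧ l = {p : ℝ × ℝ | a * p.1 + b * p.2 = c}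

/-- A simple line arrangement of `n` lines in the Euclidean plane: `n` distinct lines,
every two of which meet in exactly one point, and no point lies on three of the lines. -/
structure SimpleLineArrangement (n : ℕ) where
  lines : Finset (Set (ℝ × ℝ))
  card_lines : lines.card = n
  isLine : ∀ l ∈ lines, IsLine l
  meet : ∀ l₁ ∈ lines, ∀ l₂ ∈ lines, l₁ ≠ l₂ → ∃! p : ℝ × ℝ, p ∈ l₁ ∩ l₂
  simple : ∀ p : ℝ × ℝ, ∀ l₁ ∈ lines, ∀ l₂ ∈ lines, ∀ l₃ ∈ lines,
    p ∈ l₁ → p ∈ l₂ → p ∈ l₃ → l₁ = l₂ ∨ l₁ = l₃ ∨ l₂ = l₃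

namespace SimpleLineArrangement

variable {n : ℕ}

/-- The vertex set of the arrangement: all intersection points of pairs of lines. -/
def verts (A : SimpleLineArrangement n) : Set (ℝ × ℝ) :=
  {p | ∃ l₁ ∈ A.lines, ∃ l₂ ∈ A.lines, l₁ ≠ l₂ ∧ p ∈ l₁ ∧ p ∈ l₂}

/-- The arrangement graph: two distinct vertices are adjacent iff some line of the
arrangement contains both and no other vertex lies strictly between them on that line. -/
def graph (A : SimpleLineArrangement n) : SimpleGraph (ℝ × ℝ) where
  Adj u v := u ≠ v ∧ u ∈ A.verts ∧ v ∈ A.verts ∧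
    ∃ l ∈ A.lines, u ∈ l ∧ v ∈ l ∧ ∀ w ∈ A.verts, w ∈ l → ¬ Sbtw ℝ u w v
  symm := ⟨by
    rintro u v ⟨huv, hu, hv, l, hl, hul, hvl, hbet⟩
    exact ⟨huv.symm, hv, hu, l, hl, hvl, hul, fun w hw hwl hb => hbet w hw hwl hb.symm⟩⟩
  loopless := ⟨by rintro u ⟨h, -⟩; exact h rfl⟩

/-- The degree of a vertex in the arrangement graph. -/
noncomputable def deg (A : SimpleLineArrangement n) (v : ℝ × ℝ) : ℕ :=
  {w | A.graph.Adj v w}.ncard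

/-- The number of vertices of the arrangement graph having degree `i`. -/
noncomputable def degCount (A : SimpleLineArrangement n) (i : ℕ) : ℕ :=
  {v | v ∈ A.verts ∧ A.deg v = i}.ncard

/-- The eccentricity of a vertex: the maximum graph distance to a vertex. -/
noncomputable def ecc (A : SimpleLineArrangement n) (u : ℝ × ℝ) : ℕ :=
  sSup ((fun v => A.graph.dist u v) '' A.verts)

/-- The realization `R(L)`: the union of the closed segments joining adjacent vertices. -/
def realization (A : SimpleLineArrangement n) : Set (ℝ × ℝ) :=
  ⋃ (u : ℝ × ℝ) (v : ℝ × ℝ) (_ : A.graph.Adj u v), segment ℝ u v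

/-- A point lies on the outer face of the realization if it belongs to the closure of
the unbounded connected component of the complement of the realization. -/
def OnOuterFace (A : SimpleLineArrangement n) (p : ℝ × ℝ) : Prop :=
  ∃ q : ℝ × ℝ, q ∉ A.realization ∧
    ¬ Bornology.IsBounded (connectedComponentIn (A.realization)ᶜ q) ∧
    p ∈ closure (connectedComponentIn (A.realization)ᶜ q)

end SimpleLineArrangement

attribute [local instance] Classical.propDecidable



lemma sbtw_real_iff {x y z : ℝ} : Sbtw ℝ x y z ↔ (x < y ∧ y < z) ∨ (z < y ∧ y < x) := by
  constructor
  · intro h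
    rcases le_total x z with hle | hle
    · left
      have := h.wbtw.mem_segment
      rw [segment_eq_Icc hle] at this
      exact ⟨this.1.lt_of_ne (Ne.symm h.ne_left), this.2.lt_of_ne h.ne_right⟩
    · right
      have := h.symm.wbtw.mem_segment
      rw [segment_eq_Icc hle] at this
      exact ⟨this.1.lt_of_ne (Ne.symm h.ne_right), this.2.lt_of_ne h.ne_left⟩
  · rintro (⟨h1, h2⟩ | ⟨h1, h2⟩)
    · refine ⟨?_, h1.ne', h2.ne⟩
      rw [← mem_segment_iff_wbtw, segment_eq_Icc (h1.trans h2).le]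
      exact ⟨h1.le, h2.le⟩
    · refine ⟨?_, h2.ne, h1.ne'⟩
      rw [wbtw_comm, ← mem_segment_iff_wbtw, segment_eq_Icc (h1.trans h2).le]
      exact ⟨h1.le, h2.le⟩

/-- Lemma A: the number of "consecutive neighbours" of `v` in a finite set `S` of reals. -/
lemma adj_filter_card (S : Finset ℝ) (v : ℝ) :
    (S.filter fun w => w ≠ v ∧ ∀ u ∈ S, ¬ Sbtw ℝ v u w).card
      = (if ∀ u ∈ S, u ≤ v then 0 else 1) + (if ∀ u ∈ S, v ≤ u then 0 else 1) := by
  have habove : (¬ ∀ u ∈ S, u ≤ v) ↔ (S.filter (fun u => v < u)).Nonempty := by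
    simp only [Finset.filter_nonempty_iff]; push_neg; rfl
  have hbelow : (¬ ∀ u ∈ S, v ≤ u) ↔ (S.filter (fun u => u < v)).Nonempty := by
    simp only [Finset.filter_nonempty_iff]; push_neg; rfl
  have key : (S.filter fun w => w ≠ v ∧ ∀ u ∈ S, ¬ Sbtw ℝ v u w)
      = (if h : (S.filter (fun u => v < u)).Nonempty
            then {(S.filter (fun u => v < u)).min' h} else ∅) ∪
        (if h : (S.filter (fun u => u < v)).Nonempty
            then {(S.filter (fun u => u < v)).max' h} else ∅) := by
    ext w
    simp only [Finset.mem_filter, Finset.mem_union]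
    constructor
    · rintro ⟨hwS, hwv, hno⟩
      rcases lt_or_gt_of_ne hwv with hlt | hgt
      · right
        have hne : (S.filter (fun u => u < v)).Nonempty :=
          ⟨w, Finset.mem_filter.2 ⟨hwS, hlt⟩⟩
        rw [dif_pos hne]
        have hm := Finset.mem_filter.1 (Finset.max'_mem _ hne)
        have : w = (S.filter (fun u => u < v)).max' hne := by
          refine le_antisymm (Finset.le_max' (S.filter (fun u => u < v)) w (Finset.mem_filter.2 ⟨hwS, hlt⟩)) ?_
          by_contra hc
          push_neg at hc
          exact hno _ hm.1 (sbtw_real_iff.2 (Or.inr ⟨hc, hm.2⟩))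
        simp [this]
      · left
        have hne : (S.filter (fun u => v < u)).Nonempty :=
          ⟨w, Finset.mem_filter.2 ⟨hwS, hgt⟩⟩
        rw [dif_pos hne]
        have hm := Finset.mem_filter.1 (Finset.min'_mem _ hne)
        have : w = (S.filter (fun u => v < u)).min' hne := by
          refine le_antisymm ?_ (Finset.min'_le (S.filter (fun u => v < u)) w (Finset.mem_filter.2 ⟨hwS, hgt⟩))
          by_contra hc
          push_neg at hc
          exact hno _ hm.1 (sbtw_real_iff.2 (Or.inl ⟨hm.2, hc⟩))
        simp [this]
    · rintro (hw | hw)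
      · rcases Classical.em (S.filter (fun u => v < u)).Nonempty with hne | hne
        · rw [dif_pos hne, Finset.mem_singleton] at hw
          subst hw
          have hm := Finset.mem_filter.1 (Finset.min'_mem _ hne)
          refine ⟨hm.1, hm.2.ne', fun u hu hs => ?_⟩
          rcases sbtw_real_iff.1 hs with ⟨h1, h2⟩ | ⟨h1, h2⟩
          · exact absurd (Finset.min'_le (S.filter (fun u => v < u)) u (Finset.mem_filter.2 ⟨hu, h1⟩)) (not_le.2 h2)
          · exact absurd ((hm.2.trans h1).trans h2) (lt_irrefl v)
        · rw [dif_neg hne] at hw; exact absurd hw (Finset.notMem_empty w)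
      · rcases Classical.em (S.filter (fun u => u < v)).Nonempty with hne | hne
        · rw [dif_pos hne, Finset.mem_singleton] at hw
          subst hw
          have hm := Finset.mem_filter.1 (Finset.max'_mem _ hne)
          refine ⟨hm.1, hm.2.ne, fun u hu hs => ?_⟩
          rcases sbtw_real_iff.1 hs with ⟨h1, h2⟩ | ⟨h1, h2⟩
          · exact absurd ((h1.trans h2).trans hm.2) (lt_irrefl v)
          · exact absurd (Finset.le_max' (S.filter (fun u => u < v)) u (Finset.mem_filter.2 ⟨hu, h2⟩)) (not_le.2 h1)
        · rw [dif_neg hne] at hw; exact absurd hw (Finset.notMem_empty w)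
  rw [key]
  have e1 : ∀ (h : ¬(S.filter (fun u => v < u)).Nonempty), (∀ u ∈ S, u ≤ v) :=
    fun h => by by_contra hc; exact h (habove.mp hc)
  have e2 : ∀ (h : ¬(S.filter (fun u => u < v)).Nonempty), (∀ u ∈ S, v ≤ u) :=
    fun h => by by_contra hc; exact h (hbelow.mp hc)
  by_cases h1 : (S.filter (fun u => v < u)).Nonempty <;>
    by_cases h2 : (S.filter (fun u => u < v)).Nonempty
  · rw [dif_pos h1, dif_pos h2, if_neg (habove.mpr h1), if_neg (hbelow.mpr h2)]
    rw [Finset.card_union_of_disjoint ?hd]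
    · simp
    case hd =>
      simp only [Finset.disjoint_singleton]
      intro h
      have ha := (Finset.mem_filter.1 (Finset.min'_mem _ h1)).2
      have hb := (Finset.mem_filter.1 (Finset.max'_mem _ h2)).2
      rw [h] at ha
      exact absurd (ha.trans hb) (lt_irrefl v)
  · rw [dif_pos h1, dif_neg h2, if_neg (habove.mpr h1), if_pos (e2 h2)]
    simp
  · rw [dif_neg h1, dif_pos h2, if_pos (e1 h1), if_neg (hbelow.mpr h2)]
    simp
  · rw [dif_neg h1, dif_neg h2, if_pos (e1 h1), if_pos (e2 h2)]
    simp


noncomputable def av (n i : ℕ) : ℝ := 4 * i - 2 * n + 3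

lemma av_add_ne (n i j : ℕ) : av n i + av n j ≠ 0 := by
  unfold av
  intro h
  have h' : (4 * i + (4 * j) + 6 : ℝ) = 4 * n := by push_cast; linarith
  have : (4 * i + 4 * j + 6 : ℤ) = 4 * n := by exact_mod_cast h'
  omega

lemma av_inj {n i j : ℕ} (h : av n i = av n j) : i = j := by
  unfold av at h
  have : (i : ℝ) = j := by linarith
  exact_mod_cast this

lemma av_lt_iff {n i j : ℕ} : av n i < av n j ↔ i < j := by
  unfold av
  constructor
  · intro h; by_contra hc; push_neg at hc
    have : (j : ℝ) ≤ i := by exact_mod_cast hc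
    linarith
  · intro h; have : (i : ℝ) < j := by exact_mod_cast h
    linarith

lemma av_pos_iff {n i j : ℕ} : 0 < av n i + av n j ↔ n ≤ i + j + 1 := by
  unfold av
  constructor
  · intro h
    by_contra hc; push_neg at hc
    have : (i + j + 2 : ℝ) ≤ n := by exact_mod_cast hc
    linarith
  · intro h
    have : (n : ℝ) ≤ i + j + 1 := by exact_mod_cast h
    linarith

lemma av_neg_iff {n i j : ℕ} : av n i + av n j < 0 ↔ i + j + 2 ≤ n := by
  constructor
  · intro h
    by_contra hc
    push_neg at hc
    exact absurd ((av_pos_iff (n:=n) (i:=i) (j:=j)).2 (by omega)) (by linarith)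
  · intro h
    rcases lt_trichotomy (av n i + av n j) 0 with hl | hl | hl
    · exact hl
    · exact absurd hl (av_add_ne n i j)
    · exact absurd (av_pos_iff.1 hl) (by omega)

def Sline (n i : ℕ) : Set (ℝ × ℝ) := {p | p.1 + (av n i)^2 * p.2 = 2 * av n i}

noncomputable def Pt (n i j : ℕ) : ℝ × ℝ :=
  (2 * av n i * av n j / (av n i + av n j), 2 / (av n i + av n j))

lemma Pt_symm (n i j : ℕ) : Pt n i j = Pt n j i := by
  simp only [Pt, Prod.mk.injEq]
  rw [add_comm (av n j) (av n i)]
  constructor <;> ring_nf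

lemma Pt_mem_left (n i j : ℕ) : Pt n i j ∈ Sline n i := by
  simp only [Pt, Sline, Set.mem_setOf_eq]
  field_simp [av_add_ne n i j]
  ring

lemma Pt_mem_right (n i j : ℕ) : Pt n i j ∈ Sline n j := Pt_symm n i j ▸ Pt_mem_left n j i

lemma Pt_snd (n i j : ℕ) : (Pt n i j).2 = 2 / (av n i + av n j) := rfl

lemma mem_inter_eq_Pt {n i j : ℕ} (hij : i ≠ j) {p : ℝ × ℝ}
    (h1 : p ∈ Sline n i) (h2 : p ∈ Sline n j) : p = Pt n i j := by
  simp only [Sline, Set.mem_setOf_eq] at h1 h2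
  have hab : av n i ≠ av n j := fun h => hij (av_inj h)
  have hd : av n i - av n j ≠ 0 := sub_ne_zero.2 hab
  have hs := av_add_ne n i j
  have hz : (av n i - av n j) * (p.2 * (av n i + av n j) - 2) = 0 := by
    linear_combination h1 - h2
  have h2' : p.2 * (av n i + av n j) = 2 := by
    rcases mul_eq_zero.1 hz with h | h
    · exact absurd h hd
    · linarith
  have hy : p.2 = 2 / (av n i + av n j) := by
    field_simp
    linarith
  have hx : p.1 = 2 * av n i * av n j / (av n i + av n j) := by
    rw [hy] at h1
    field_simp at h1 ⊢
    linear_combination h1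
  rw [Prod.ext_iff]
  exact ⟨hx, hy⟩

lemma Pt_right_inj {n i j l : ℕ} (h : Pt n i j = Pt n i l) : j = l := by
  have := congrArg Prod.snd h
  simp only [Pt_snd] at this
  rw [div_eq_div_iff (av_add_ne n i j) (av_add_ne n i l)] at this
  have : av n j = av n l := by linarith
  exact av_inj this

lemma Sline_inj {n i j : ℕ} (h : Sline n i = Sline n j) : i = j := by
  have h1 : (2 * av n i, (0:ℝ)) ∈ Sline n i := by simp [Sline]
  rw [h] at h1
  simp only [Sline, Set.mem_setOf_eq] at h1
  have : av n i = av n j := by linarith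
  exact av_inj this

noncomputable def arr (n : ℕ) : SimpleLineArrangement n where
  lines := (Finset.range n).image (Sline n)
  card_lines := by
    rw [Finset.card_image_of_injOn (fun i _ j _ h => Sline_inj h), Finset.card_range]
  isLine := by
    rintro l hl
    simp only [Finset.mem_image, Finset.mem_range] at hl
    obtain ⟨i, _, rfl⟩ := hl
    exact ⟨1, (av n i)^2, 2 * av n i, by simp, by simp [Sline]⟩
  meet := by
    rintro l₁ h₁ l₂ h₂ hne
    simp only [Finset.mem_image, Finset.mem_range] at h₁ h₂
    obtain ⟨i, _, rfl⟩ := h₁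
    obtain ⟨j, _, rfl⟩ := h₂
    have hij : i ≠ j := fun h => hne (by rw [h])
    exact ⟨Pt n i j, ⟨Pt_mem_left n i j, Pt_mem_right n i j⟩,
      fun p hp => mem_inter_eq_Pt hij hp.1 hp.2⟩
  simple := by
    rintro p l₁ h₁ l₂ h₂ l₃ h₃ hp₁ hp₂ hp₃
    simp only [Finset.mem_image, Finset.mem_range] at h₁ h₂ h₃
    obtain ⟨i, _, rfl⟩ := h₁
    obtain ⟨j, _, rfl⟩ := h₂
    obtain ⟨l, _, rfl⟩ := h₃
    by_contra hc
    push_neg at hc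
    obtain ⟨c1, c2, c3⟩ := hc
    have hij : i ≠ j := fun h => c1 (by rw [h])
    have hil : i ≠ l := fun h => c2 (by rw [h])
    have e1 := mem_inter_eq_Pt hij hp₁ hp₂
    have e2 := mem_inter_eq_Pt hil hp₁ hp₃
    exact c3 (by rw [Pt_right_inj (e1.symm.trans e2)])
noncomputable def gmap (n i : ℕ) : ℝ →ᵃ[ℝ] ℝ × ℝ :=
  AffineMap.lineMap ((2 * av n i, 0) : ℝ × ℝ) ((2 * av n i - (av n i)^2, 1) : ℝ × ℝ)

lemma gmap_apply (n i : ℕ) (t : ℝ) : gmap n i t = (2 * av n i - (av n i)^2 * t, t) := by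
  simp only [gmap, AffineMap.lineMap_apply_module']
  rw [Prod.ext_iff]
  constructor <;> simp <;> ring

lemma gmap_inj (n i : ℕ) : Function.Injective (gmap n i) := by
  intro s t h
  have := congrArg Prod.snd h
  simpa [gmap_apply] using this

lemma gmap_of_mem {n i : ℕ} {p : ℝ × ℝ} (hp : p ∈ Sline n i) : gmap n i p.2 = p := by
  simp only [Sline, Set.mem_setOf_eq] at hp
  rw [gmap_apply, Prod.ext_iff]
  exact ⟨by simp; linarith, rfl⟩

lemma sbtw_iff_snd {n i : ℕ} {u w x : ℝ × ℝ} (hu : u ∈ Sline n i) (hw : w ∈ Sline n i)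
    (hx : x ∈ Sline n i) : Sbtw ℝ u w x ↔ Sbtw ℝ u.2 w.2 x.2 := by
  conv_lhs => rw [← gmap_of_mem hu, ← gmap_of_mem hw, ← gmap_of_mem hx]
  exact (gmap_inj n i).sbtw_map_iff

noncomputable def VF (n i : ℕ) : Finset (ℝ × ℝ) := ((Finset.range n).erase i).image (Pt n i)

noncomputable def ys (n i : ℕ) : Finset ℝ :=
  ((Finset.range n).erase i).image (fun j => 2 / (av n i + av n j))

lemma ys_eq_image (n i : ℕ) : ys n i = (VF n i).image Prod.snd := by
  rw [VF, Finset.image_image]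
  rfl

lemma VF_subset_line {n i : ℕ} {w : ℝ × ℝ} (hw : w ∈ VF n i) : w ∈ Sline n i := by
  simp only [VF, Finset.mem_image] at hw
  obtain ⟨j, _, rfl⟩ := hw
  exact Pt_mem_left n i j

lemma mem_verts_iff {n : ℕ} {v : ℝ × ℝ} :
    v ∈ (arr n).verts ↔ ∃ i j, i < n ∧ j < n ∧ i ≠ j ∧ v = Pt n i j := by
  constructor
  · rintro ⟨l₁, h₁, l₂, h₂, hne, hv₁, hv₂⟩
    simp only [arr, Finset.mem_image, Finset.mem_range] at h₁ h₂
    obtain ⟨i, hi, rfl⟩ := h₁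
    obtain ⟨j, hj, rfl⟩ := h₂
    have hij : i ≠ j := fun h => hne (by rw [h])
    exact ⟨i, j, hi, hj, hij, mem_inter_eq_Pt hij hv₁ hv₂⟩
  · rintro ⟨i, j, hi, hj, hij, rfl⟩
    refine ⟨Sline n i, ?_, Sline n j, ?_, ?_, Pt_mem_left n i j, Pt_mem_right n i j⟩
    · simp only [arr, Finset.mem_image, Finset.mem_range]; exact ⟨i, hi, rfl⟩
    · simp only [arr, Finset.mem_image, Finset.mem_range]; exact ⟨j, hj, rfl⟩
    · intro h; exact hij (Sline_inj h)

lemma mem_VF_iff {n i : ℕ} (hi : i < n) {w : ℝ × ℝ} :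
    w ∈ VF n i ↔ w ∈ (arr n).verts ∧ w ∈ Sline n i := by
  constructor
  · intro hw
    simp only [VF, Finset.mem_image, Finset.mem_erase, Finset.mem_range] at hw
    obtain ⟨j, ⟨hji, hj⟩, rfl⟩ := hw
    exact ⟨mem_verts_iff.2 ⟨i, j, hi, hj, fun h => hji h.symm, rfl⟩, Pt_mem_left n i j⟩
  · rintro ⟨hv, hl⟩
    obtain ⟨a, b, ha, hb, hab, rfl⟩ := mem_verts_iff.1 hv
    simp only [VF, Finset.mem_image, Finset.mem_erase, Finset.mem_range]
    rcases eq_or_ne i a with rfl | hia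
    · exact ⟨b, ⟨fun h => hab h.symm, hb⟩, rfl⟩
    · have h := mem_inter_eq_Pt hia hl (Pt_mem_left n a b)
      exact ⟨a, ⟨fun hh => hia hh.symm, ha⟩, h.symm⟩

lemma Pt_snd_mem_ys {n i j : ℕ} (hj : j < n) (hij : j ≠ i) : (Pt n i j).2 ∈ ys n i := by
  simp only [ys, Finset.mem_image, Finset.mem_erase, Finset.mem_range]
  exact ⟨j, ⟨hij, hj⟩, (Pt_snd n i j).symm⟩

lemma line_of_Pt_mem {n i j t : ℕ} (hij : i ≠ j) (ht : Pt n i j ∈ Sline n t) :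
    t = i ∨ t = j := by
  by_contra hc
  push_neg at hc
  have h1 : Pt n i j = Pt n t i := mem_inter_eq_Pt hc.1 ht (Pt_mem_left n i j)
  have h2 : Pt n i j = Pt n t j := mem_inter_eq_Pt hc.2 ht (Pt_mem_right n i j)
  exact hij (Pt_right_inj (h1.symm.trans h2))
lemma av_le_iff {n i j : ℕ} : av n i ≤ av n j ↔ i ≤ j := by
  constructor
  · intro h
    by_contra hc
    push_neg at hc
    exact absurd (av_lt_iff.2 hc) (not_lt.2 h)
  · intro h
    rcases Nat.lt_or_ge i j with hlt | hge
    · exact (av_lt_iff.2 hlt).le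
    · have : i = j := le_antisymm h hge
      rw [this]

lemma tdle_pos {a b : ℝ} (ha : 0 < a) (hab : a ≤ b) : 2 / b ≤ 2 / a := by
  rw [div_le_div_iff₀ (by linarith) ha]; linarith

lemma tdle_neg {a b : ℝ} (hb : b < 0) (hab : a ≤ b) : 2 / b ≤ 2 / a := by
  have key : 2 / (-a) ≤ 2 / (-b) := by
    rw [div_le_div_iff₀ (by linarith) (by linarith)]; linarith
  rw [div_neg, div_neg] at key; linarith

lemma tdlt_pos {a b : ℝ} (ha : 0 < a) (hab : a < b) : 2 / b < 2 / a := by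
  rw [div_lt_div_iff₀ (by linarith) ha]; linarith

lemma tdlt_neg {a b : ℝ} (hb : b < 0) (hab : a < b) : 2 / b < 2 / a := by
  have key : 2 / (-a) < 2 / (-b) := by
    rw [div_lt_div_iff₀ (by linarith) (by linarith)]; linarith
  rw [div_neg, div_neg] at key; linarith

lemma tdlt_cross {a b : ℝ} (ha : a < 0) (hb : 0 < b) : 2 / a < 2 / b :=
  lt_trans (div_neg_of_pos_of_neg two_pos ha) (div_pos two_pos hb)

def μf (n i : ℕ) : ℕ := if 2 * i + 1 = n then i + 1 else n - 1 - i
def νf (n i : ℕ) : ℕ := if i = n - 1 then n - 2 else n - 2 - i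

lemma mem_ys_iff {n i : ℕ} {u : ℝ} :
    u ∈ ys n i ↔ ∃ l, l < n ∧ l ≠ i ∧ u = 2 / (av n i + av n l) := by
  simp only [ys, Finset.mem_image, Finset.mem_erase, Finset.mem_range]
  constructor
  · rintro ⟨l, ⟨hli, hl⟩, rfl⟩; exact ⟨l, hl, hli, rfl⟩
  · rintro ⟨l, hl, hli, rfl⟩; exact ⟨l, ⟨hli, hl⟩, rfl⟩

lemma max_iff {n i j : ℕ} (hodd : n % 2 = 1) (hn : 5 ≤ n) (hi : i < n) (hj : j < n)
    (hij : j ≠ i) :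
    (∀ u ∈ ys n i, u ≤ 2 / (av n i + av n j)) ↔ j = μf n i := by
  have hμlt : μf n i < n := by simp only [μf]; split_ifs <;> omega
  have hμne : μf n i ≠ i := by simp only [μf]; split_ifs <;> omega
  have hμpos : 0 < av n i + av n (μf n i) :=
    av_pos_iff.2 (by simp only [μf]; split_ifs <;> omega)
  constructor
  · intro h
    by_contra hne
    have hu := h _ (mem_ys_iff.2 ⟨μf n i, hμlt, hμne, rfl⟩)
    have hlt : 2 / (av n i + av n j) < 2 / (av n i + av n (μf n i)) := by
      rcases lt_trichotomy (av n i + av n j) 0 with hs | hs | hs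
      · exact tdlt_cross hs hμpos
      · exact absurd hs (av_add_ne n i j)
      · refine tdlt_pos hμpos ((add_lt_add_iff_left _).2 (av_lt_iff.2 ?_))
        have hnij : n ≤ i + j + 1 := av_pos_iff.1 hs
        simp only [μf] at hne ⊢
        split_ifs at hne ⊢ with hc <;> omega
    exact absurd hu (not_le.2 hlt)
  · rintro rfl
    intro u hu
    obtain ⟨l, hl, hli, rfl⟩ := mem_ys_iff.1 hu
    rcases lt_trichotomy (av n i + av n l) 0 with hs | hs | hs
    · exact (tdlt_cross hs hμpos).le
    · exact absurd hs (av_add_ne n i l)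
    · refine tdle_pos hμpos ((add_le_add_iff_left _).2 (av_le_iff.2 ?_))
      have hnil : n ≤ i + l + 1 := av_pos_iff.1 hs
      simp only [μf]
      split_ifs with hc <;> omega

lemma min_iff {n i j : ℕ} (hodd : n % 2 = 1) (hn : 5 ≤ n) (hi : i < n) (hj : j < n)
    (hij : j ≠ i) :
    (∀ u ∈ ys n i, 2 / (av n i + av n j) ≤ u) ↔ j = νf n i := by
  have hνlt : νf n i < n := by simp only [νf]; split_ifs <;> omega
  have hνne : νf n i ≠ i := by simp only [νf]; split_ifs <;> omega
  rcases eq_or_ne i (n - 1) with hlast | hlast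
  · -- all partners on the positive side
    have hpos : ∀ l, l < n → l ≠ i → 0 < av n i + av n l :=
      fun l hl hli => av_pos_iff.2 (by omega)
    have hν : νf n i = n - 2 := by simp only [νf, if_pos hlast]
    constructor
    · intro h
      by_contra hne
      have hu := h _ (mem_ys_iff.2 ⟨νf n i, hνlt, hνne, rfl⟩)
      have hlt : 2 / (av n i + av n (νf n i)) < 2 / (av n i + av n j) := by
        refine tdlt_pos (hpos j hj hij) ((add_lt_add_iff_left _).2 (av_lt_iff.2 ?_))
        omega
      exact absurd hu (not_le.2 hlt)
    · rintro rfl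
      intro u hu
      obtain ⟨l, hl, hli, rfl⟩ := mem_ys_iff.1 hu
      refine tdle_pos (hpos l hl hli) ((add_le_add_iff_left _).2 (av_le_iff.2 ?_))
      omega
  · have hile : i + 2 ≤ n := by omega
    have hν : νf n i = n - 2 - i := by simp only [νf, if_neg hlast]
    have hνneg : av n i + av n (νf n i) < 0 := av_neg_iff.2 (by omega)
    constructor
    · intro h
      by_contra hne
      have hu := h _ (mem_ys_iff.2 ⟨νf n i, hνlt, hνne, rfl⟩)
      have hlt : 2 / (av n i + av n (νf n i)) < 2 / (av n i + av n j) := by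
        rcases lt_trichotomy (av n i + av n j) 0 with hs | hs | hs
        · refine tdlt_neg hνneg ((add_lt_add_iff_left _).2 (av_lt_iff.2 ?_))
          have := av_neg_iff.1 hs
          omega
        · exact absurd hs (av_add_ne n i j)
        · exact tdlt_cross hνneg hs
      exact absurd hu (not_le.2 hlt)
    · rintro rfl
      intro u hu
      obtain ⟨l, hl, hli, rfl⟩ := mem_ys_iff.1 hu
      rcases lt_trichotomy (av n i + av n l) 0 with hs | hs | hs
      · refine tdle_neg hνneg ((add_le_add_iff_left _).2 (av_le_iff.2 ?_))
        have := av_neg_iff.1 hs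
        omega
      · exact absurd hs (av_add_ne n i l)
      · exact (tdlt_cross hνneg hs).le

lemma μf_ne_νf {n i : ℕ} (hodd : n % 2 = 1) (hn : 5 ≤ n) (hi : i < n) : μf n i ≠ νf n i := by
  simp only [μf, νf]; split_ifs <;> omega
lemma snd_inj_line {n i : ℕ} {p q : ℝ × ℝ} (hp : p ∈ Sline n i) (hq : q ∈ Sline n i)
    (h : p.2 = q.2) : p = q := by
  rw [← gmap_of_mem hp, ← gmap_of_mem hq, h]

lemma Sline_mem_lines {n i : ℕ} (hi : i < n) : Sline n i ∈ (arr n).lines := by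
  simp only [arr, Finset.mem_image, Finset.mem_range]
  exact ⟨i, hi, rfl⟩

lemma adj_iff {n i j : ℕ} (hi : i < n) (hj : j < n) (hij : i ≠ j) (w : ℝ × ℝ) :
    (arr n).graph.Adj (Pt n i j) w ↔
      w ∈ ((VF n i).filter fun w =>
              w ≠ Pt n i j ∧ ∀ u ∈ VF n i, ¬ Sbtw ℝ (Pt n i j).2 u.2 w.2) ∪
          ((VF n j).filter fun w =>
              w ≠ Pt n i j ∧ ∀ u ∈ VF n j, ¬ Sbtw ℝ (Pt n i j).2 u.2 w.2) := by
  rw [Finset.mem_union, Finset.mem_filter, Finset.mem_filter]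
  constructor
  · rintro ⟨hvw, hv, hw, l, hl, hvl, hwl, hbet⟩
    simp only [arr, Finset.mem_image, Finset.mem_range] at hl
    obtain ⟨t, ht, rfl⟩ := hl
    rcases line_of_Pt_mem hij hvl with rfl | rfl
    · left
      refine ⟨(mem_VF_iff ht).2 ⟨hw, hwl⟩, Ne.symm hvw, fun u hu hs => ?_⟩
      have hu' := (mem_VF_iff ht).1 hu
      exact hbet u hu'.1 hu'.2
        ((sbtw_iff_snd hvl (VF_subset_line hu) hwl).2 hs)
    · right
      refine ⟨(mem_VF_iff ht).2 ⟨hw, hwl⟩, Ne.symm hvw, fun u hu hs => ?_⟩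
      have hu' := (mem_VF_iff ht).1 hu
      exact hbet u hu'.1 hu'.2
        ((sbtw_iff_snd hvl (VF_subset_line hu) hwl).2 hs)
  · rintro (⟨hwVF, hne, hcond⟩ | ⟨hwVF, hne, hcond⟩)
    · refine ⟨Ne.symm hne, mem_verts_iff.2 ⟨i, j, hi, hj, hij, rfl⟩,
        ((mem_VF_iff hi).1 hwVF).1, Sline n i, Sline_mem_lines hi, Pt_mem_left n i j,
        VF_subset_line hwVF, fun u hu hul hs => ?_⟩
      exact hcond u ((mem_VF_iff hi).2 ⟨hu, hul⟩)
        ((sbtw_iff_snd (Pt_mem_left n i j) hul (VF_subset_line hwVF)).1 hs)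
    · refine ⟨Ne.symm hne, mem_verts_iff.2 ⟨i, j, hi, hj, hij, rfl⟩,
        ((mem_VF_iff hj).1 hwVF).1, Sline n j, Sline_mem_lines hj, Pt_mem_right n i j,
        VF_subset_line hwVF, fun u hu hul hs => ?_⟩
      exact hcond u ((mem_VF_iff hj).2 ⟨hu, hul⟩)
        ((sbtw_iff_snd (Pt_mem_right n i j) hul (VF_subset_line hwVF)).1 hs)

lemma filter_card_eq {n i : ℕ} {v : ℝ × ℝ} (hv : v ∈ Sline n i) :
    ((VF n i).filter fun w => w ≠ v ∧ ∀ u ∈ VF n i, ¬ Sbtw ℝ v.2 u.2 w.2).card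
      = ((ys n i).filter fun y => y ≠ v.2 ∧ ∀ u ∈ ys n i, ¬ Sbtw ℝ v.2 u y).card := by
  refine Finset.card_bij (fun w _ => w.2) ?_ ?_ ?_
  · rintro w hw
    rw [Finset.mem_filter] at hw ⊢
    obtain ⟨hwVF, hne, hcond⟩ := hw
    refine ⟨?_, ?_, ?_⟩
    · rw [ys_eq_image]; exact Finset.mem_image_of_mem _ hwVF
    · intro h
      exact hne (snd_inj_line (VF_subset_line hwVF) hv h)
    · intro u hu
      rw [ys_eq_image, Finset.mem_image] at hu
      obtain ⟨u', hu', rfl⟩ := hu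
      exact hcond u' hu'
  · rintro w₁ hw₁ w₂ hw₂ h
    exact snd_inj_line (VF_subset_line (Finset.mem_filter.1 hw₁).1)
      (VF_subset_line (Finset.mem_filter.1 hw₂).1) h
  · rintro y hy
    rw [Finset.mem_filter] at hy
    obtain ⟨hyys, hne, hcond⟩ := hy
    rw [ys_eq_image, Finset.mem_image] at hyys
    obtain ⟨w, hw, rfl⟩ := hyys
    refine ⟨w, Finset.mem_filter.2 ⟨hw, ?_, ?_⟩, rfl⟩
    · intro h; exact hne (by rw [h])
    · intro u hu hs
      exact hcond u.2 (by rw [ys_eq_image]; exact Finset.mem_image_of_mem _ hu) hs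

lemma deg_eq {n i j : ℕ} (hodd : n % 2 = 1) (hn : 5 ≤ n) (hi : i < n) (hj : j < n)
    (hij : i ≠ j) :
    (arr n).deg (Pt n i j)
      = (if j = μf n i ∨ j = νf n i then 1 else 2)
        + (if i = μf n j ∨ i = νf n j then 1 else 2) := by
  have hset : {w | (arr n).graph.Adj (Pt n i j) w}
      = ↑(((VF n i).filter fun w =>
              w ≠ Pt n i j ∧ ∀ u ∈ VF n i, ¬ Sbtw ℝ (Pt n i j).2 u.2 w.2) ∪
          ((VF n j).filter fun w =>
              w ≠ Pt n i j ∧ ∀ u ∈ VF n j, ¬ Sbtw ℝ (Pt n i j).2 u.2 w.2)) := by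
    ext w
    rw [Set.mem_setOf_eq, Finset.coe_union, Set.mem_union, adj_iff hi hj hij w,
      Finset.mem_union]
    simp
  rw [SimpleLineArrangement.deg, hset, Set.ncard_coe_finset,
    Finset.card_union_of_disjoint ?hdisj]
  case hdisj =>
    rw [Finset.disjoint_left]
    rintro w hw₁ hw₂
    rw [Finset.mem_filter] at hw₁ hw₂
    exact hw₁.2.1 (mem_inter_eq_Pt hij (VF_subset_line hw₁.1) (VF_subset_line hw₂.1))
  have hvi : Pt n i j ∈ Sline n i := Pt_mem_left n i j
  have hvj : Pt n i j ∈ Sline n j := Pt_mem_right n i j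
  rw [filter_card_eq hvi, filter_card_eq hvj]
  rw [adj_filter_card _ _ , adj_filter_card _ _]
  have hsnd_i : (Pt n i j).2 = 2 / (av n i + av n j) := Pt_snd n i j
  have hsnd_j : (Pt n i j).2 = 2 / (av n j + av n i) := by
    rw [Pt_symm]; exact Pt_snd n j i
  have hmax_i : (∀ u ∈ ys n i, u ≤ (Pt n i j).2) ↔ j = μf n i := by
    rw [hsnd_i]; exact max_iff hodd hn hi hj (Ne.symm hij)
  have hmin_i : (∀ u ∈ ys n i, (Pt n i j).2 ≤ u) ↔ j = νf n i := by
    rw [hsnd_i]; exact min_iff hodd hn hi hj (Ne.symm hij)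
  have hmax_j : (∀ u ∈ ys n j, u ≤ (Pt n i j).2) ↔ i = μf n j := by
    rw [hsnd_j]; exact max_iff hodd hn hj hi hij
  have hmin_j : (∀ u ∈ ys n j, (Pt n i j).2 ≤ u) ↔ i = νf n j := by
    rw [hsnd_j]; exact min_iff hodd hn hj hi hij
  rw [if_congr hmax_i rfl rfl, if_congr hmin_i rfl rfl,
    if_congr hmax_j rfl rfl, if_congr hmin_j rfl rfl]
  have hside : ∀ (a b : Prop) (_ : Decidable a) (_ : Decidable b), ¬(a ∧ b) →
      ((if a then 0 else 1) + (if b then 0 else 1) : ℕ) = if a ∨ b then 1 else 2 := by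
    intro a b _ _ h
    by_cases ha : a <;> by_cases hb : b <;> simp [ha, hb] <;> exact absurd ⟨ha, hb⟩ h
  rw [hside _ _ _ _ (fun h => μf_ne_νf hodd hn hi (h.1.symm.trans h.2)),
    hside _ _ _ _ (fun h => μf_ne_νf hodd hn hj (h.1.symm.trans h.2))]
noncomputable def pairs (n : ℕ) : Finset (ℕ × ℕ) :=
  (Finset.range n ×ˢ Finset.range n).filter fun p => p.1 < p.2

lemma mem_pairs {n : ℕ} {p : ℕ × ℕ} : p ∈ pairs n ↔ p.1 < n ∧ p.2 < n ∧ p.1 < p.2 := by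
  simp only [pairs, Finset.mem_filter, Finset.mem_product, Finset.mem_range]
  tauto

noncomputable def Xv (n : ℕ) (p : ℕ × ℕ) : ℕ :=
  (if p.2 = μf n p.1 ∨ p.2 = νf n p.1 then 1 else 2)
    + (if p.1 = μf n p.2 ∨ p.1 = νf n p.2 then 1 else 2)

lemma av_sum_inj {n a b c d : ℕ} (h : av n a + av n b = av n c + av n d)
    (h2 : av n a * av n b = av n c * av n d) :
    (a = c ∧ b = d) ∨ (a = d ∧ b = c) := by
  have key : (av n a - av n c) * (av n a - av n d) = 0 := by linear_combination av n a * h - h2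
  rcases mul_eq_zero.1 key with hz | hz
  · left
    have h1 : a = c := av_inj (by linarith)
    refine ⟨h1, av_inj (n := n) ?_⟩
    rw [h1] at h
    linarith
  · right
    have h1 : a = d := av_inj (by linarith)
    refine ⟨h1, av_inj (n := n) ?_⟩
    rw [h1] at h
    linarith

lemma Pt_inj_pairs {n : ℕ} {p q : ℕ × ℕ} (hp : p ∈ pairs n) (hq : q ∈ pairs n)
    (h : Pt n p.1 p.2 = Pt n q.1 q.2) : p = q := by
  rw [mem_pairs] at hp hq
  have hsnd := congrArg Prod.snd h
  have hfst := congrArg Prod.fst h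
  simp only [Pt] at hsnd hfst
  have hs1 := av_add_ne n p.1 p.2
  have hs2 := av_add_ne n q.1 q.2
  rw [div_eq_div_iff hs1 hs2] at hsnd
  have hsum : av n p.1 + av n p.2 = av n q.1 + av n q.2 := by linarith
  rw [div_eq_div_iff hs1 hs2] at hfst
  have hprod : av n p.1 * av n p.2 = av n q.1 * av n q.2 := by
    have hne2 : (2:ℝ) ≠ 0 := two_ne_zero
    have : 2 * av n p.1 * av n p.2 * (av n p.1 + av n p.2)
        = 2 * av n q.1 * av n q.2 * (av n p.1 + av n p.2) := by
      rw [hsum] at hfst ⊢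
      linarith
    have h3 := mul_right_cancel₀ hs1 this
    linarith
  rcases av_sum_inj hsum hprod with ⟨h1, h2⟩ | ⟨h1, h2⟩
  · exact Prod.ext h1 h2
  · omega

lemma degCount_eq {n : ℕ} (hodd : n % 2 = 1) (hn : 5 ≤ n) (d : ℕ) :
    (arr n).degCount d = ((pairs n).filter fun p => Xv n p = d).card := by
  have hset : {v | v ∈ (arr n).verts ∧ (arr n).deg v = d}
      = ↑(((pairs n).filter fun p => Xv n p = d).image fun p => Pt n p.1 p.2) := by
    ext v
    simp only [Set.mem_setOf_eq, Finset.coe_image, Set.mem_image, Finset.mem_coe,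
      Finset.mem_filter]
    constructor
    · rintro ⟨hv, hd⟩
      obtain ⟨i, j, hi, hj, hij, rfl⟩ := mem_verts_iff.1 hv
      rcases Nat.lt_or_ge i j with hlt | hge
      · refine ⟨(i, j), ⟨mem_pairs.2 ⟨hi, hj, hlt⟩, ?_⟩, rfl⟩
        rw [← hd, deg_eq hodd hn hi hj hij]
        rfl
      · have hji : j < i := by omega
        refine ⟨(j, i), ⟨mem_pairs.2 ⟨hj, hi, hji⟩, ?_⟩, Pt_symm n j i⟩
        rw [← hd, Pt_symm n i j, deg_eq hodd hn hj hi (Ne.symm hij)]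
        rfl
    · rintro ⟨p, ⟨hp, hX⟩, rfl⟩
      have hp' := mem_pairs.1 hp
      refine ⟨mem_verts_iff.2 ⟨p.1, p.2, hp'.1, hp'.2.1, Nat.ne_of_lt hp'.2.2, rfl⟩, ?_⟩
      rw [deg_eq hodd hn hp'.1 hp'.2.1 (Nat.ne_of_lt hp'.2.2), ← hX]
      rfl
  rw [SimpleLineArrangement.degCount, hset, Set.ncard_coe_finset]
  exact Finset.card_image_of_injOn fun p hp q hq h =>
    Pt_inj_pairs (Finset.mem_filter.1 hp).1 (Finset.mem_filter.1 hq).1 h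
lemma Xv_two_iff {n : ℕ} {p : ℕ × ℕ} :
    Xv n p = 2 ↔ ((p.2 = μf n p.1 ∨ p.2 = νf n p.1) ∧ (p.1 = μf n p.2 ∨ p.1 = νf n p.2)) := by
  unfold Xv
  split_ifs with c1 c2 c2 <;> simp_all

lemma Xv_three_iff {n : ℕ} {p : ℕ × ℕ} :
    Xv n p = 3 ↔ (((p.2 = μf n p.1 ∨ p.2 = νf n p.1) ∧ ¬(p.1 = μf n p.2 ∨ p.1 = νf n p.2))
      ∨ (¬(p.2 = μf n p.1 ∨ p.2 = νf n p.1) ∧ (p.1 = μf n p.2 ∨ p.1 = νf n p.2))) := by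
  unfold Xv
  split_ifs with c1 c2 c2 <;> simp_all

lemma count2 {n K : ℕ} (hn : n = 2 * K + 1) (hK : 2 ≤ K) :
    ((pairs n).filter fun p => Xv n p = 2).card = 2 * K := by
  have hset : ((pairs n).filter fun p => Xv n p = 2)
      = ((Finset.range K).image fun i => (i, n - 1 - i)) ∪
        ((Finset.range K).image fun i => (i, n - 2 - i)) := by
    ext ⟨i, j⟩
    simp only [Finset.mem_filter, Finset.mem_union, Finset.mem_image, Finset.mem_range,
      mem_pairs, Xv_two_iff, Prod.mk.injEq]
    constructor
    · rintro ⟨⟨hi, hj, hij⟩, hc⟩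
      have harith : i < K ∧ (j = n - 1 - i ∨ j = n - 2 - i) := by
        simp only [μf, νf] at hc
        split_ifs at hc <;> omega
      rcases harith.2 with h | h
      · exact Or.inl ⟨i, harith.1, rfl, h.symm⟩
      · exact Or.inr ⟨i, harith.1, rfl, h.symm⟩
    · rintro (⟨x, hx, rfl, rfl⟩ | ⟨x, hx, rfl, rfl⟩)
      · refine ⟨⟨by omega, by omega, by omega⟩, ?_, ?_⟩
        · simp only [μf, νf]; split_ifs <;> omega
        · simp only [μf, νf]; split_ifs <;> omega
      · refine ⟨⟨by omega, by omega, by omega⟩, ?_, ?_⟩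
        · simp only [μf, νf]; split_ifs <;> omega
        · simp only [μf, νf]; split_ifs <;> omega
  rw [hset, Finset.card_union_of_disjoint, Finset.card_image_of_injOn,
    Finset.card_image_of_injOn, Finset.card_range]
  · omega
  · intro x hx y hy h
    exact congrArg Prod.fst h
  · intro x hx y hy h
    exact congrArg Prod.fst h
  · rw [Finset.disjoint_left]
    rintro ⟨a, b⟩ h1 h2
    simp only [Finset.mem_image, Finset.mem_range, Prod.mk.injEq] at h1 h2
    obtain ⟨x, hx, rfl, rfl⟩ := h1
    obtain ⟨y, hy, rfl, h⟩ := h2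
    omega

lemma count3 {n K : ℕ} (hn : n = 2 * K + 1) (hK : 2 ≤ K) :
    ((pairs n).filter fun p => Xv n p = 3).card = 2 := by
  have hset : ((pairs n).filter fun p => Xv n p = 3)
      = {(K, K + 1), (n - 2, n - 1)} := by
    ext ⟨i, j⟩
    simp only [Finset.mem_filter, Finset.mem_insert, Finset.mem_singleton,
      mem_pairs, Xv_three_iff, Prod.mk.injEq]
    constructor
    · rintro ⟨⟨hi, hj, hij⟩, hc⟩
      simp only [μf, νf] at hc
      split_ifs at hc <;> omega
    · rintro (⟨rfl, rfl⟩ | ⟨rfl, rfl⟩)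
      · refine ⟨⟨by omega, by omega, by omega⟩, ?_⟩
        simp only [μf, νf]
        split_ifs <;> omega
      · refine ⟨⟨by omega, by omega, by omega⟩, ?_⟩
        simp only [μf, νf]
        split_ifs <;> omega
  rw [hset, Finset.card_insert_of_notMem, Finset.card_singleton]
  simp only [Finset.mem_singleton, Prod.mk.injEq]
  omega

lemma pairs_card_two (n : ℕ) : (pairs n).card * 2 = n * (n - 1) := by
  have hset : pairs n
      = (Finset.range n).biUnion fun j => (Finset.range j).image fun i => (i, j) := by
    ext ⟨a, b⟩
    simp only [mem_pairs, Finset.mem_biUnion, Finset.mem_image, Finset.mem_range,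
      Prod.mk.injEq]
    constructor
    · rintro ⟨ha, hb, hab⟩
      exact ⟨b, hb, a, hab, rfl, rfl⟩
    · rintro ⟨x, hx, y, hyx, rfl, rfl⟩
      exact ⟨by omega, hx, hyx⟩
  rw [hset, Finset.card_biUnion]
  · have : ∀ j ∈ Finset.range n, ((Finset.range j).image fun i => (i, j)).card = j := by
      intro j _
      rw [Finset.card_image_of_injOn fun x _ y _ h => congrArg Prod.fst h, Finset.card_range]
    rw [Finset.sum_congr rfl this, Finset.sum_range_id_mul_two]
  · intro x _ y _ hxy
    dsimp only [Function.onFun]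
    rw [Finset.disjoint_left]
    rintro ⟨a, b⟩ h1 h2
    simp only [Finset.mem_image, Finset.mem_range, Prod.mk.injEq] at h1 h2
    obtain ⟨u, hu, rfl, rfl⟩ := h1
    obtain ⟨w, hw, -, h⟩ := h2
    exact hxy h.symm

lemma count4 {n K : ℕ} (hn : n = 2 * K + 1) (hK : 2 ≤ K) :
    ((pairs n).filter fun p => Xv n p = 4).card = (pairs n).card - 2 * K - 2 := by
  have hparts : ∀ p ∈ pairs n, Xv n p = 2 ∨ Xv n p = 3 ∨ Xv n p = 4 := by
    intro p _
    unfold Xv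
    split_ifs <;> omega
  have hsplit : ((pairs n).filter fun p => Xv n p = 4)
      = pairs n \ (((pairs n).filter fun p => Xv n p = 2) ∪
          ((pairs n).filter fun p => Xv n p = 3)) := by
    ext p
    simp only [Finset.mem_filter, Finset.mem_sdiff, Finset.mem_union]
    constructor
    · rintro ⟨hp, h4⟩
      refine ⟨hp, ?_⟩
      rintro (hh | hh) <;> omega
    · rintro ⟨hp, hno⟩
      push_neg at hno
      have h2 : Xv n p ≠ 2 := hno.1 hp
      have h3 : Xv n p ≠ 3 := hno.2 hp
      rcases hparts p hp with h | h | h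
      · exact absurd h h2
      · exact absurd h h3
      · exact ⟨hp, h⟩
  rw [hsplit, Finset.card_sdiff_of_subset]
  · rw [Finset.card_union_of_disjoint, count2 hn hK, count3 hn hK]
    · omega
    · rw [Finset.disjoint_left]
      rintro p h1 h2
      rw [Finset.mem_filter] at h1 h2
      omega
  · intro p hp
    rw [Finset.mem_union, Finset.mem_filter, Finset.mem_filter] at hp
    rcases hp with h | h <;> exact h.1

theorem star_with_pull_construction_exists (m : ℕ) (hm : 4 ≤ m) (heven : Even m) :
    ∃ A : SimpleLineArrangement (m + 1),
      A.degCount 2 = m ∧ A.degCount 3 = 2 ∧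
      A.degCount 4 = (m + 1) * (m - 2) / 2 - 1 := by
  obtain ⟨K, hKm⟩ := heven
  have hn : m + 1 = 2 * K + 1 := by omega
  have hK : 2 ≤ K := by omega
  have hodd : (m + 1) % 2 = 1 := by omega
  have h5 : 5 ≤ m + 1 := by omega
  refine ⟨arr (m + 1), ?_, ?_, ?_⟩
  · rw [degCount_eq hodd h5 2, count2 hn hK]
    omega
  · rw [degCount_eq hodd h5 3, count3 hn hK]
  · rw [degCount_eq hodd h5 4, count4 hn hK]
    have htot := pairs_card_two (m + 1)
    have e1 : (m + 1) * (m - 2) + (m + 1) * 2 = (m + 1) * m := by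
      rw [← Nat.mul_add]
      congr 1
      omega
    have e2 : (m + 1) * (m + 1 - 1) = (m + 1) * m := by
      congr 1
    omega
end

section
/- Let L be a simple line arrangement of n ≥ 3 lines, let u, v be distinct vertices of G_L, and let P be a shortest u,v-path in G_L of length k. Then the set of lines of L containing at least one vertex of P has exactly k + 2 elements. -/
open Classical in
noncomputable def lco (l : Set (ℝ × ℝ)) : ℝ × ℝ × ℝ :=
  if h : IsLine l then ⟨h.choose, h.choose_spec.choose, h.choose_spec.choose_spec.choose⟩
  else ⟨1, 0, 0⟩

noncomputable def lfn (l : Set (ℝ × ℝ)) (p : ℝ × ℝ) : ℝ :=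
  (lco l).1 * p.1 + (lco l).2.1 * p.2 - (lco l).2.2

lemma lfn_zero_iff {l : Set (ℝ × ℝ)} (h : IsLine l) (p : ℝ × ℝ) : lfn l p = 0 ↔ p ∈ l := by
  have hspec := h.choose_spec.choose_spec.choose_spec.2
  unfold lfn lco
  rw [dif_pos h]
  constructor
  · intro h0
    rw [hspec]
    simpa [Set.mem_setOf_eq, sub_eq_zero] using h0
  · intro hp
    rw [hspec] at hp
    simp only [Set.mem_setOf_eq] at hp
    rw [sub_eq_zero]
    exact hp

lemma lineMap_eval (x z : ℝ × ℝ) (t : ℝ) :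
    AffineMap.lineMap x z t = (x.1 + t * (z.1 - x.1), x.2 + t * (z.2 - x.2)) := by
  simp only [AffineMap.lineMap_apply, vsub_eq_sub, vadd_eq_add]
  ext <;> simp <;> ring

lemma lfn_lineMap (l : Set (ℝ × ℝ)) (x z : ℝ × ℝ) (t : ℝ) :
    lfn l (AffineMap.lineMap x z t) = (1 - t) * lfn l x + t * lfn l z := by
  rw [lineMap_eval]
  unfold lfn
  simp only []
  ring

lemma lineMap_inj {x z : ℝ × ℝ} (hxz : x ≠ z) {a b : ℝ}
    (h : AffineMap.lineMap x z a = AffineMap.lineMap x z b) : a = b := by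
  rw [lineMap_eval, lineMap_eval, Prod.ext_iff] at h
  obtain ⟨h1, h2⟩ := h
  simp only [add_right_inj] at h1 h2
  have hK : (z.1 - x.1) ≠ 0 ∨ (z.2 - x.2) ≠ 0 := by
    by_contra hc
    push_neg at hc
    apply hxz
    obtain ⟨hc1, hc2⟩ := hc
    ext <;> [skip; skip] <;> linarith [hc1, hc2]
  rcases hK with hK | hK
  · exact mul_right_cancel₀ hK h1
  · exact mul_right_cancel₀ hK h2

lemma sbtw_param {x w z : ℝ × ℝ} (h : Sbtw ℝ x w z) :
    ∃ t : ℝ, t ∈ Set.Ioo (0:ℝ) 1 ∧ AffineMap.lineMap x z t = w :=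
  (sbtw_iff_mem_image_Ioo_and_ne.mp h).1

lemma sbtw_of_param {x z : ℝ × ℝ} (hxz : x ≠ z) {t : ℝ} (ht : t ∈ Set.Ioo (0:ℝ) 1) :
    Sbtw ℝ x (AffineMap.lineMap x z t) z :=
  sbtw_lineMap_iff.mpr ⟨hxz, ht⟩

lemma opp_signs {g : Set (ℝ × ℝ)} (hg : IsLine g) {x w z : ℝ × ℝ} (hsb : Sbtw ℝ x w z)
    (hw : w ∈ g) (hx : x ∉ g) (hz : z ∉ g) : lfn g x * lfn g z < 0 := by
  obtain ⟨t, ⟨ht0, ht1⟩, hteq⟩ := sbtw_param hsb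
  have h0 : (1 - t) * lfn g x + t * lfn g z = 0 := by
    rw [← lfn_lineMap, hteq]
    exact (lfn_zero_iff hg w).mpr hw
  have hx0 : lfn g x ≠ 0 := fun h => hx ((lfn_zero_iff hg x).mp h)
  have hz0 : lfn g z ≠ 0 := fun h => hz ((lfn_zero_iff hg z).mp h)
  have htb : t * lfn g z = -((1 - t) * lfn g x) := by linarith
  have key : t * (lfn g x * lfn g z) = -(1 - t) * (lfn g x * lfn g x) := by
    calc t * (lfn g x * lfn g z) = lfn g x * (t * lfn g z) := by ring
    _ = lfn g x * (-((1 - t) * lfn g x)) := by rw [htb]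
    _ = -(1 - t) * (lfn g x * lfn g x) := by ring
  nlinarith [mul_self_pos.mpr hx0, key]

namespace SLAaux

open SimpleLineArrangement SimpleGraph

variable {n : ℕ} (A : SimpleLineArrangement n)

lemma line_unique {l₁ l₂ : Set (ℝ × ℝ)} (h1 : l₁ ∈ A.lines) (h2 : l₂ ∈ A.lines)
    {p q : ℝ × ℝ} (hpq : p ≠ q) (hp1 : p ∈ l₁) (hq1 : q ∈ l₁) (hp2 : p ∈ l₂) (hq2 : q ∈ l₂) :
    l₁ = l₂ := by
  by_contra hne
  obtain ⟨x, -, hx⟩ := A.meet l₁ h1 l₂ h2 hne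
  exact hpq ((hx p ⟨hp1, hp2⟩).trans (hx q ⟨hq1, hq2⟩).symm)

lemma third_line {p : ℝ × ℝ} {g₁ g₂ g₃ : Set (ℝ × ℝ)}
    (h1 : g₁ ∈ A.lines) (h2 : g₂ ∈ A.lines) (h3 : g₃ ∈ A.lines) (h12 : g₁ ≠ g₂)
    (hp1 : p ∈ g₁) (hp2 : p ∈ g₂) (hp3 : p ∈ g₃) : g₃ = g₁ ∨ g₃ = g₂ := by
  rcases A.simple p g₃ h3 g₁ h1 g₂ h2 hp3 hp1 hp2 with h | h | h
  exacts [Or.inl h, Or.inr h, absurd h h12]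

lemma lines_pair {p : ℝ × ℝ} (hp : p ∈ A.verts) :
    ∃ l₁ l₂, l₁ ∈ A.lines ∧ l₂ ∈ A.lines ∧ l₁ ≠ l₂ ∧ p ∈ l₁ ∧ p ∈ l₂ ∧
      {l | l ∈ A.lines ∧ p ∈ l} = {l₁, l₂} := by
  obtain ⟨l₁, h1, l₂, h2, hne, hp1, hp2⟩ := hp
  refine ⟨l₁, l₂, h1, h2, hne, hp1, hp2, ?_⟩
  ext l
  constructor
  · rintro ⟨hl, hpl⟩
    rcases A.simple p l hl l₁ h1 l₂ h2 hpl hp1 hp2 with h | h | h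
    exacts [Or.inl h, Or.inr h, absurd h hne]
  · rintro (rfl | rfl)
    exacts [⟨h1, hp1⟩, ⟨h2, hp2⟩]

lemma edge_no_cross {g : Set (ℝ × ℝ)} (hg : g ∈ A.lines) {p q : ℝ × ℝ}
    (hadj : A.graph.Adj p q) : ¬ (lfn g p * lfn g q < 0) := by
  intro hneg
  obtain ⟨hpq, hpv, hqv, m, hm, hpm, hqm, hbet⟩ := hadj
  have hgIs := A.isLine g hg
  have hmIs := A.isLine m hm
  set a := lfn g p with ha_def
  set b := lfn g q with hb_def
  have hab : a - b ≠ 0 := by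
    intro h
    have : a = b := by linarith
    rw [this] at hneg
    nlinarith
  set t : ℝ := a / (a - b) with ht_def
  have ht : t ∈ Set.Ioo (0:ℝ) 1 := by
    rcases mul_neg_iff.mp hneg with ⟨ha1, hb1⟩ | ⟨ha1, hb1⟩
    · constructor
      · exact div_pos ha1 (by linarith)
      · rw [div_lt_one (by linarith)]; linarith
    · have hrw : t = (-a) / (b - a) := by
        rw [ht_def, ← neg_div_neg_eq, neg_sub]
      rw [hrw]
      constructor
      · exact div_pos (by linarith) (by linarith)
      · rw [div_lt_one (by linarith)]; linarith
  set w := AffineMap.lineMap p q t with hw_def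
  have hwg : lfn g w = 0 := by
    rw [hw_def, lfn_lineMap, ← ha_def, ← hb_def, ht_def]
    field_simp
    ring
  have hw_mem_g : w ∈ g := (lfn_zero_iff hgIs w).mp hwg
  have hw_mem_m : w ∈ m := by
    have h1 : lfn m p = 0 := (lfn_zero_iff hmIs p).mpr hpm
    have h2 : lfn m q = 0 := (lfn_zero_iff hmIs q).mpr hqm
    have : lfn m w = 0 := by rw [hw_def, lfn_lineMap, h1, h2]; ring
    exact (lfn_zero_iff hmIs w).mp this
  have hmg : m ≠ g := by
    intro h
    subst h
    have : a = 0 := (lfn_zero_iff hgIs p).mpr hpm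
    rw [this] at hneg; simp at hneg
  have hw_vert : w ∈ A.verts := ⟨m, hm, g, hg, hmg, hw_mem_m, hw_mem_g⟩
  exact hbet w hw_vert hw_mem_m (sbtw_of_param hpq ht)

open Classical in
noncomputable def otherL (A : SimpleLineArrangement n) (l' : Set (ℝ × ℝ)) (w : ℝ × ℝ) :
    Set (ℝ × ℝ) :=
  if h : ∃ g, g ∈ A.lines ∧ g ≠ l' ∧ w ∈ g then h.choose else ∅

lemma otherL_spec {l' w} (h : ∃ g, g ∈ A.lines ∧ g ≠ l' ∧ w ∈ g) :
    otherL A l' w ∈ A.lines ∧ otherL A l' w ≠ l' ∧ w ∈ otherL A l' w := by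
  unfold otherL
  rw [dif_pos h]
  exact h.choose_spec

lemma exists_other {l' w} (hw : w ∈ A.verts) : ∃ g, g ∈ A.lines ∧ g ≠ l' ∧ w ∈ g := by
  obtain ⟨g₁, h1, g₂, h2, hne, hw1, hw2⟩ := hw
  by_cases h : g₁ = l'
  · exact ⟨g₂, h2, fun e => hne (h.trans e.symm), hw2⟩
  · exact ⟨g₁, h1, h, hw1⟩

lemma otherL_injOn {l' : Set (ℝ × ℝ)} (hl' : l' ∈ A.lines) :
    Set.InjOn (otherL A l') {w | w ∈ A.verts ∧ w ∈ l'} := by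
  rintro w ⟨hwv, hwl⟩ w' ⟨hwv', hwl'⟩ heq
  by_contra hne
  obtain ⟨hg1, hg2, hg3⟩ := otherL_spec A (exists_other A (l' := l') hwv)
  obtain ⟨hg1', hg2', hg3'⟩ := otherL_spec A (exists_other A (l' := l') hwv')
  rw [heq] at hg3
  exact hg2' (line_unique A hg1' hl' hne hg3 hg3' hwl hwl')

lemma between_finite {l' : Set (ℝ × ℝ)} (hl' : l' ∈ A.lines) (x z : ℝ × ℝ) :
    {w | w ∈ A.verts ∧ w ∈ l' ∧ Sbtw ℝ x w z}.Finite := by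
  apply Set.Finite.of_finite_image (f := otherL A l')
  · apply A.lines.finite_toSet.subset
    rintro g ⟨w, hw, rfl⟩
    exact (otherL_spec A (exists_other A hw.1)).1
  · intro w hw w' hw' heq
    exact otherL_injOn A hl' ⟨hw.1, hw.2.1⟩ ⟨hw'.1, hw'.2.1⟩ heq

lemma alpha {l' : Set (ℝ × ℝ)} (hl' : l' ∈ A.lines) :
    ∀ (N : ℕ) (x z : ℝ × ℝ), x ∈ A.verts → z ∈ A.verts → x ≠ z → x ∈ l' → z ∈ l' →
      {w | w ∈ A.verts ∧ w ∈ l' ∧ Sbtw ℝ x w z}.ncard = N →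
      ∃ W : A.graph.Walk x z, W.length ≤ N + 1 := by
  intro N
  induction N using Nat.strong_induction_on with
  | _ N ih =>
  intro x z hx hz hxz hxl hzl hB
  by_cases hemp : {w | w ∈ A.verts ∧ w ∈ l' ∧ Sbtw ℝ x w z} = ∅
  · have hadj : A.graph.Adj x z :=
      ⟨hxz, hx, hz, l', hl', hxl, hzl, fun w hw hwl hsb =>
        (Set.eq_empty_iff_forall_notMem.mp hemp w) ⟨hw, hwl, hsb⟩⟩
    exact ⟨SimpleGraph.Walk.cons hadj SimpleGraph.Walk.nil, by simp⟩
  · set B := {w | w ∈ A.verts ∧ w ∈ l' ∧ Sbtw ℝ x w z} with hBdef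
    have hBfin : B.Finite := between_finite A hl' x z
    have hBne : B.Nonempty := Set.nonempty_iff_ne_empty.mpr hemp
    obtain ⟨M, hM⟩ : ∃ M, N = M + 1 := by
      rcases N with _ | M
      · exfalso
        rw [Set.ncard_eq_zero hBfin] at hB
        exact hemp hB
      · exact ⟨M, rfl⟩
    have hK : 0 < (z.1 - x.1) * (z.1 - x.1) + (z.2 - x.2) * (z.2 - x.2) := by
      have hne : z.1 - x.1 ≠ 0 ∨ z.2 - x.2 ≠ 0 := by
        by_contra hc
        push_neg at hc
        exact hxz (Prod.ext_iff.mpr ⟨by linarith [hc.1], by linarith [hc.2]⟩)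
      rcases hne with h | h
      · nlinarith [mul_self_pos.mpr h, mul_self_nonneg (z.2 - x.2)]
      · nlinarith [mul_self_pos.mpr h, mul_self_nonneg (z.1 - x.1)]
    obtain ⟨w₀, hw₀B, hmin⟩ := Set.exists_min_image B
      (fun w => (w.1 - x.1) * (z.1 - x.1) + (w.2 - x.2) * (z.2 - x.2)) hBfin hBne
    obtain ⟨hw₀v, hw₀l, hw₀sb⟩ := hw₀B
    obtain ⟨t₀, ⟨ht₀0, ht₀1⟩, ht₀eq⟩ := sbtw_param hw₀sb
    have hparam_le : ∀ w ∈ B, ∀ t : ℝ, AffineMap.lineMap x z t = w → t₀ ≤ t := by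
      intro w hw t hteq
      have h1 := hmin w hw
      rw [← hteq, ← ht₀eq, lineMap_eval, lineMap_eval] at h1
      simp only at h1
      nlinarith [hK, h1]
    have hxw₀ : x ≠ w₀ := fun e => hw₀sb.2.1 e.symm
    have hwz : w₀ ≠ z := hw₀sb.2.2
    have hadj0 : A.graph.Adj x w₀ := by
      refine ⟨hxw₀, hx, hw₀v, l', hl', hxl, hw₀l, ?_⟩
      intro ww hwwv hwwl hsb'
      obtain ⟨s, ⟨hs0, hs1⟩, hseq⟩ := sbtw_param hsb'
      have hcomp : AffineMap.lineMap x z (s * t₀) = ww := by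
        rw [← hseq, ← ht₀eq, lineMap_eval, lineMap_eval, lineMap_eval]
        simp only [Prod.mk.injEq]
        constructor <;> ring
      have hwwB : ww ∈ B := ⟨hwwv, hwwl, by
        rw [← hcomp]
        exact sbtw_of_param hxz ⟨mul_pos hs0 ht₀0, by nlinarith⟩⟩
      have := hparam_le ww hwwB (s * t₀) hcomp
      nlinarith
    have hBset : {w | w ∈ A.verts ∧ w ∈ l' ∧ Sbtw ℝ w₀ w z} = B \ {w₀} := by
      ext ww
      constructor
      · rintro ⟨hv', hl'', hsb'⟩
        obtain ⟨s, ⟨hs0, hs1⟩, hseq⟩ := sbtw_param hsb'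
        have hcomp : AffineMap.lineMap x z (t₀ + s * (1 - t₀)) = ww := by
          rw [← hseq, ← ht₀eq, lineMap_eval, lineMap_eval, lineMap_eval]
          simp only [Prod.mk.injEq]
          constructor <;> ring
        refine ⟨⟨hv', hl'', ?_⟩, ?_⟩
        · rw [← hcomp]
          exact sbtw_of_param hxz ⟨by nlinarith, by nlinarith⟩
        · simp only [Set.mem_singleton_iff]
          intro he
          rw [he] at hcomp
          have := lineMap_inj hxz (hcomp.trans ht₀eq.symm)
          nlinarith
      · rintro ⟨⟨hv', hl'', hsb'⟩, hne'⟩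
        simp only [Set.mem_singleton_iff] at hne'
        obtain ⟨tw, ⟨htw0, htw1⟩, htweq⟩ := sbtw_param hsb'
        have hle : t₀ ≤ tw := hparam_le _ ⟨hv', hl'', hsb'⟩ tw htweq
        have hlt : t₀ < tw := lt_of_le_of_ne hle (fun e => hne' (by rw [← htweq, ← e, ht₀eq]))
        refine ⟨hv', hl'', ?_⟩
        have h1t : (1:ℝ) - t₀ ≠ 0 := by linarith
        have hcomp : AffineMap.lineMap w₀ z ((tw - t₀) / (1 - t₀)) = ww := by
          rw [← htweq, ← ht₀eq, lineMap_eval, lineMap_eval, lineMap_eval]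
          simp only [Prod.mk.injEq]
          constructor <;> (field_simp; ring)
        rw [← hcomp]
        exact sbtw_of_param hwz ⟨div_pos (by linarith) (by linarith),
          by rw [div_lt_one (by linarith)]; linarith⟩
    have hB' : {w | w ∈ A.verts ∧ w ∈ l' ∧ Sbtw ℝ w₀ w z}.ncard = M := by
      have hw₀B' : w₀ ∈ B := by rw [hBdef]; exact ⟨hw₀v, hw₀l, hw₀sb⟩
      rw [hBset, Set.ncard_diff_singleton_of_mem hw₀B', hB]
      omega
    obtain ⟨W', hW'⟩ := ih M (by omega) w₀ z hw₀v hz hwz hw₀l hzl hB'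
    refine ⟨SimpleGraph.Walk.cons hadj0 W', ?_⟩
    simp only [SimpleGraph.Walk.length_cons]
    omega

open SimpleGraph.Walk in
lemma getVert_cons_one {V : Type*} {G : SimpleGraph V} {u v w : V} (q : G.Walk v w)
    (hadj : G.Adj u v) : (q.cons hadj).getVert 1 = v :=
  (getVert_cons_succ (n := 0) q hadj).trans q.getVert_zero

open SimpleGraph.Walk in
lemma firstVert {V : Type*} {G : SimpleGraph V} (p : V → Prop) :
    ∀ {a b : V} (W : G.Walk a b), W.IsPath → (∃ w ∈ W.support, p w) → ¬ p a →
    ∃ (c : V) (Q : G.Walk a c) (R : G.Walk c b), p c ∧ Q.IsPath ∧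
      (∀ w ∈ Q.support, w ≠ c → ¬ p w) ∧ 1 ≤ Q.length ∧ Q.getVert 1 = W.getVert 1 ∧
      Q.length + R.length ≤ W.length ∧ (∀ w ∈ Q.support, w ∈ W.support) := by
  intro a b W
  induction W with
  | nil =>
    rintro _ ⟨w, hw, hpw⟩ hpa
    simp only [support_nil, List.mem_singleton] at hw
    subst hw
    exact absurd hpw hpa
  | @cons a y b h W' ih =>
    intro hpath hex hpa
    by_cases hpy : p y
    · refine ⟨y, cons h nil, W', hpy, ?_, ?_, ?_, ?_, ?_, ?_⟩
      · simp [cons_isPath_iff, h.ne]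
      · intro w hw hwy
        simp only [support_cons, support_nil, List.mem_cons, List.mem_singleton,
          List.not_mem_nil, or_false] at hw
        rcases hw with rfl | rfl
        · exact hpa
        · exact absurd rfl hwy
      · simp
      · rw [getVert_cons_one, getVert_cons_one]
      · simp [Nat.add_comm]
      · intro w hw
        simp only [support_cons, support_nil, List.mem_cons, List.mem_singleton,
          List.not_mem_nil, or_false] at hw
        rcases hw with rfl | rfl
        · simp [support_cons]
        · simp [support_cons, start_mem_support]
    · have hW'path : W'.IsPath := hpath.of_cons
      have haW' : a ∉ W'.support := ((cons_isPath_iff h W').mp hpath).2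
      obtain ⟨w, hw, hpw⟩ := hex
      simp only [support_cons, List.mem_cons] at hw
      rcases hw with rfl | hw
      · exact absurd hpw hpa
      obtain ⟨c, Q', R', hpc, hQ'p, hQ'int, hQ'1, -, hQ'len, hQ'sub⟩ :=
        ih hW'path ⟨w, hw, hpw⟩ hpy
      refine ⟨c, cons h Q', R', hpc, ?_, ?_, ?_, ?_, ?_, ?_⟩
      · exact hQ'p.cons (fun hc => haW' (hQ'sub a hc))
      · intro v hv hvc
        simp only [support_cons, List.mem_cons] at hv
        rcases hv with rfl | hv
        · exact hpa
        · exact hQ'int v hv hvc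
      · simp
      · rw [getVert_cons_one, getVert_cons_one]
      · simp only [length_cons]
        omega
      · intro v hv
        simp only [support_cons, List.mem_cons] at hv ⊢
        rcases hv with rfl | hv
        · exact Or.inl rfl
        · exact Or.inr (hQ'sub v hv)

open SimpleGraph.Walk in
lemma getVert_one_ne_end {V : Type*} {G : SimpleGraph V} {a b : V} (Q : G.Walk a b)
    (hQ : Q.IsPath) (h2 : 2 ≤ Q.length) : Q.getVert 1 ≠ b := by
  cases Q with
  | nil => simp at h2
  | @cons a y b h Q' =>
    rw [getVert_cons_one]
    intro hyb
    subst hyb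
    have h1 : Q'.IsPath := hQ.of_cons
    have h2' : Q' = nil := (isPath_iff_eq_nil (p := Q')).mp h1
    subst h2'
    simp at h2

open SimpleGraph SimpleGraph.Walk in
lemma key {l' : Set (ℝ × ℝ)} (hl' : l' ∈ A.lines) {x z : ℝ × ℝ}
    (hx : x ∈ A.verts) (hz : z ∈ A.verts) (hxz : x ≠ z) (hxl : x ∈ l') (hzl : z ∈ l')
    (Q : A.graph.Walk x z) (hQp : Q.IsPath) (hQs : Q.length = A.graph.dist x z)
    (hint : ∀ w ∈ Q.support, w ≠ x → w ≠ z → w ∉ l') (h2 : 2 ≤ Q.length) : False := by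
  classical
  set r := Q.length with hrdef
  set v : ℕ → ℝ × ℝ := Q.getVert with hvdef
  have hv0 : v 0 = x := Q.getVert_zero
  have hvr : v r = z := Q.getVert_length
  have hadj : ∀ i, i < r → A.graph.Adj (v i) (v (i + 1)) := fun i hi => Q.adj_getVert_succ hi
  have hsupp : ∀ i, i ≤ r → v i ∈ Q.support := fun i hi =>
    SimpleGraph.Walk.mem_support_iff_exists_getVert.mpr ⟨i, rfl, hi⟩
  set F : Set (ℝ × ℝ) → ℝ × ℝ → ℝ := fun g p => (if lfn g x < 0 then 1 else -1) * lfn g p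
    with hFdef
  have hFzero : ∀ g, IsLine g → ∀ p, (F g p = 0 ↔ p ∈ g) := by
    intro g hg p
    rw [hFdef]
    simp only
    constructor
    · intro h
      rcases mul_eq_zero.mp h with h | h
      · split_ifs at h <;> norm_num at h
      · exact (lfn_zero_iff hg p).mp h
    · intro h
      rw [(lfn_zero_iff hg p).mpr h, mul_zero]
  have hFmul : ∀ g (p q : ℝ × ℝ), F g p * F g q = lfn g p * lfn g q := by
    intro g p q
    rw [hFdef]
    simp only
    split_ifs <;> ring
  have hedgeF : ∀ g ∈ A.lines, ∀ i < r, ¬ (F g (v i) * F g (v (i + 1)) < 0) := by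
    intro g hg i hi hlt
    exact edge_no_cross A hg (hadj i hi) (by rwa [hFmul] at hlt)
  set Gf : Finset (Set (ℝ × ℝ)) := A.lines.filter
      (fun g => g ≠ l' ∧ x ∉ g ∧ z ∉ g ∧ ∃ w, w ∈ A.verts ∧ w ∈ l' ∧ w ∈ g ∧ Sbtw ℝ x w z)
    with hGfdef
  have hGf : ∀ g ∈ Gf, g ∈ A.lines ∧ g ≠ l' ∧ x ∉ g ∧ z ∉ g ∧
      ∃ w, w ∈ A.verts ∧ w ∈ l' ∧ w ∈ g ∧ Sbtw ℝ x w z := by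
    intro g hg
    rw [hGfdef, Finset.mem_filter] at hg
    exact ⟨hg.1, hg.2⟩
  have hFx : ∀ g ∈ Gf, F g x < 0 := by
    intro g hg
    obtain ⟨hgl, -, hxg, -⟩ := hGf g hg
    have hne : lfn g x ≠ 0 := fun h => hxg ((lfn_zero_iff (A.isLine g hgl) x).mp h)
    rw [hFdef]
    simp only
    split_ifs with h
    · linarith
    · have hpos : 0 < lfn g x := lt_of_le_of_ne (not_lt.mp h) (Ne.symm hne)
      nlinarith
  have hFz : ∀ g ∈ Gf, 0 < F g z := by
    intro g hg
    obtain ⟨hgl, -, hxg, hzg, w, hwv, hwl, hwg, hwsb⟩ := hGf g hg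
    have hopp : lfn g x * lfn g z < 0 := opp_signs (A.isLine g hgl) hwsb hwg hxg hzg
    have hopp' : F g x * F g z < 0 := by rwa [hFmul]
    nlinarith [hFx g hg]
  have hA : ∀ g ∈ Gf, ∃ k : ℕ, 1 ≤ k ∧ k ≤ r - 1 ∧ v k ∈ g ∧ F g (v (k - 1)) < 0 := by
    intro g hg
    obtain ⟨hgl, -, hxg, hzg, -⟩ := hGf g hg
    set S : Finset ℕ := (Finset.range (r + 1)).filter (fun i => F g (v i) < 0) with hSdef
    have h0S : 0 ∈ S := by
      rw [hSdef, Finset.mem_filter, Finset.mem_range]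
      exact ⟨by omega, by rw [hv0]; exact hFx g hg⟩
    have hSne : S.Nonempty := ⟨0, h0S⟩
    set k := S.max' hSne with hkdef
    have hkS : k ∈ S := S.max'_mem hSne
    rw [hSdef, Finset.mem_filter, Finset.mem_range] at hkS
    obtain ⟨hkr, hkF⟩ := hkS
    have hkltr : k < r := by
      rcases Nat.lt_or_ge k r with h | h
      · exact h
      · exfalso
        have hkr' : k = r := by omega
        rw [hkr', hvr] at hkF
        linarith [hFz g hg]
    have hnotneg : ¬ F g (v (k + 1)) < 0 := by
      intro hcon
      have hmem : k + 1 ∈ S := by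
        rw [hSdef, Finset.mem_filter, Finset.mem_range]
        exact ⟨by omega, hcon⟩
      have := S.le_max' (k + 1) hmem
      omega
    have hnotpos : ¬ 0 < F g (v (k + 1)) := by
      intro hcon
      exact hedgeF g hgl k hkltr (by nlinarith)
    have hzero : F g (v (k + 1)) = 0 := by
      rcases lt_trichotomy (F g (v (k + 1))) 0 with h | h | h
      · exact absurd h hnotneg
      · exact h
      · exact absurd h hnotpos
    have hon : v (k + 1) ∈ g := (hFzero g (A.isLine g hgl) _).mp hzero
    have hne_r : k + 1 ≠ r := by
      intro h
      rw [h, hvr] at hon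
      exact hzg hon
    exact ⟨k + 1, by omega, by omega, hon, by simpa using hkF⟩
  choose aV haV1 haVr haVon haVneg using hA
  have hD : ∀ g ∈ Gf, ∃ k : ℕ, 2 ≤ k ∧ k ≤ r ∧ v (k - 1) ∈ g ∧ 0 < F g (v k) := by
    intro g hg
    obtain ⟨hgl, -, hxg, hzg, -⟩ := hGf g hg
    set T : Finset ℕ := (Finset.range (r + 1)).filter (fun i => 0 < F g (v i)) with hTdef
    have hrT : r ∈ T := by
      rw [hTdef, Finset.mem_filter, Finset.mem_range]
      exact ⟨by omega, by rw [hvr]; exact hFz g hg⟩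
    have hTne : T.Nonempty := ⟨r, hrT⟩
    set k := T.min' hTne with hkdef
    have hkT : k ∈ T := T.min'_mem hTne
    rw [hTdef, Finset.mem_filter, Finset.mem_range] at hkT
    obtain ⟨hkr, hkF⟩ := hkT
    have hk0 : k ≠ 0 := by
      intro h
      rw [h, hv0] at hkF
      linarith [hFx g hg]
    have hnotpos : ¬ 0 < F g (v (k - 1)) := by
      intro hcon
      have hmem : k - 1 ∈ T := by
        rw [hTdef, Finset.mem_filter, Finset.mem_range]
        exact ⟨by omega, hcon⟩
      have := T.min'_le (k - 1) hmem
      omega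
    have hnotneg : ¬ F g (v (k - 1)) < 0 := by
      intro hcon
      apply hedgeF g hgl (k - 1) (by omega)
      have hidx : k - 1 + 1 = k := by omega
      rw [hidx]
      nlinarith
    have hzero : F g (v (k - 1)) = 0 := by
      rcases lt_trichotomy (F g (v (k - 1))) 0 with h | h | h
      · exact absurd h hnotneg
      · exact h
      · exact absurd h hnotpos
    have hon : v (k - 1) ∈ g := (hFzero g (A.isLine g hgl) _).mp hzero
    have hk2 : 2 ≤ k := by
      rcases Nat.lt_or_ge k 2 with h | h
      · exfalso
        have hk1 : k = 1 := by omega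
        rw [hk1] at hon
        simp only [Nat.sub_self] at hon
        rw [hv0] at hon
        exact hxg hon
      · exact h
    exact ⟨k, hk2, by omega, hon, hkF⟩
  choose dV hdV2 hdVr hdVon hdVpos using hD
  have haVinj : ∀ g₁ g₂ (h₁ : g₁ ∈ Gf) (h₂ : g₂ ∈ Gf), aV g₁ h₁ = aV g₂ h₂ → g₁ = g₂ := by
    intro g₁ g₂ h₁ h₂ heq
    by_contra hne
    have hi1 : 1 ≤ aV g₁ h₁ := haV1 g₁ h₁
    have hir : aV g₁ h₁ ≤ r - 1 := haVr g₁ h₁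
    have hon1 : v (aV g₁ h₁) ∈ g₁ := haVon g₁ h₁
    have hon2 : v (aV g₁ h₁) ∈ g₂ := by rw [heq]; exact haVon g₂ h₂
    have hneg1 : F g₁ (v (aV g₁ h₁ - 1)) < 0 := haVneg g₁ h₁
    have hneg2 : F g₂ (v (aV g₁ h₁ - 1)) < 0 := by rw [heq]; exact haVneg g₂ h₂
    obtain ⟨-, -, -, m, hm, hm1, hm2, -⟩ := hadj (aV g₁ h₁ - 1) (by omega)
    have hidx : aV g₁ h₁ - 1 + 1 = aV g₁ h₁ := by omega
    rw [hidx] at hm2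
    rcases third_line A (hGf g₁ h₁).1 (hGf g₂ h₂).1 hm hne hon1 hon2 hm2 with h | h
    · rw [h] at hm1
      have := (hFzero g₁ (A.isLine g₁ (hGf g₁ h₁).1) _).mpr hm1
      linarith
    · rw [h] at hm1
      have := (hFzero g₂ (A.isLine g₂ (hGf g₂ h₂).1) _).mpr hm1
      linarith
  have hdVinj : ∀ g₁ g₂ (h₁ : g₁ ∈ Gf) (h₂ : g₂ ∈ Gf), dV g₁ h₁ = dV g₂ h₂ → g₁ = g₂ := by
    intro g₁ g₂ h₁ h₂ heq
    by_contra hne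
    have hi2 : 2 ≤ dV g₁ h₁ := hdV2 g₁ h₁
    have hir : dV g₁ h₁ ≤ r := hdVr g₁ h₁
    have hon1 : v (dV g₁ h₁ - 1) ∈ g₁ := hdVon g₁ h₁
    have hon2 : v (dV g₁ h₁ - 1) ∈ g₂ := by rw [heq]; exact hdVon g₂ h₂
    have hpos1 : 0 < F g₁ (v (dV g₁ h₁)) := hdVpos g₁ h₁
    have hpos2 : 0 < F g₂ (v (dV g₁ h₁)) := by rw [heq]; exact hdVpos g₂ h₂
    obtain ⟨-, -, -, m, hm, hm1, hm2, -⟩ := hadj (dV g₁ h₁ - 1) (by omega)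
    have hidx : dV g₁ h₁ - 1 + 1 = dV g₁ h₁ := by omega
    rw [hidx] at hm2
    rcases third_line A (hGf g₁ h₁).1 (hGf g₂ h₂).1 hm hne hon1 hon2 hm1 with h | h
    · rw [h] at hm2
      have := (hFzero g₁ (A.isLine g₁ (hGf g₁ h₁).1) _).mpr hm2
      linarith
    · rw [h] at hm2
      have := (hFzero g₂ (A.isLine g₂ (hGf g₂ h₂).1) _).mpr hm2
      linarith
  have haVmem : ∀ g (h : g ∈ Gf), aV g h ∈ Finset.Icc 1 (r - 1) := fun g h =>
    Finset.mem_Icc.mpr ⟨haV1 g h, haVr g h⟩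
  have hdVmem : ∀ g (h : g ∈ Gf), dV g h ∈ Finset.Icc 2 r := fun g h =>
    Finset.mem_Icc.mpr ⟨hdV2 g h, hdVr g h⟩
  have hcard_le : Gf.card ≤ r - 1 := by
    have h1 := Finset.card_le_card_of_injOn (s := Gf) (t := Finset.Icc 1 (r - 1))
      (fun g => if h : g ∈ Gf then aV g h else 0)
      (fun g hg => by
        show (if h : g ∈ Gf then aV g h else 0) ∈ Finset.Icc 1 (r - 1)
        rw [dif_pos (Finset.mem_coe.mp hg)]
        exact haVmem g hg)
      (by
        intro g₁ hg₁ g₂ hg₂ heq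
        simp only [Finset.mem_coe] at hg₁ hg₂
        replace heq : (if h : g₁ ∈ Gf then aV g₁ h else 0) =
            (if h : g₂ ∈ Gf then aV g₂ h else 0) := heq
        rw [dif_pos hg₁, dif_pos hg₂] at heq
        exact haVinj _ _ hg₁ hg₂ heq)
    calc Gf.card ≤ (Finset.Icc 1 (r - 1)).card := h1
    _ = r - 1 := by rw [Nat.card_Icc]; omega
  set B := {w | w ∈ A.verts ∧ w ∈ l' ∧ Sbtw ℝ x w z} with hBdef
  have hBfin : B.Finite := between_finite A hl' x z
  have hBG : B.ncard ≤ Gf.card := by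
    have him : otherL A l' '' B ⊆ ↑Gf := by
      rintro g ⟨w, hw, rfl⟩
      obtain ⟨hwv, hwl, hwsb⟩ := hw
      obtain ⟨ho1, ho2, ho3⟩ := otherL_spec A (exists_other A (l' := l') hwv)
      have hwx : w ≠ x := hwsb.2.1
      have hwz : w ≠ z := hwsb.2.2
      have hxo : x ∉ otherL A l' w := fun hxo =>
        ho2 (line_unique A ho1 hl' hwx ho3 hxo hwl hxl)
      have hzo : z ∉ otherL A l' w := fun hzo =>
        ho2 (line_unique A ho1 hl' hwz ho3 hzo hwl hzl)
      simp only [Finset.mem_coe, hGfdef, Finset.mem_filter]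
      exact ⟨ho1, ho2, hxo, hzo, w, hwv, hwl, ho3, hwsb⟩
    have hinj : Set.InjOn (otherL A l') B := by
      intro w hw w' hw' heq
      exact otherL_injOn A hl' ⟨hw.1, hw.2.1⟩ ⟨hw'.1, hw'.2.1⟩ heq
    calc B.ncard = (otherL A l' '' B).ncard := (Set.ncard_image_of_injOn hinj).symm
    _ ≤ (↑Gf : Set (Set (ℝ × ℝ))).ncard := Set.ncard_le_ncard him Gf.finite_toSet
    _ = Gf.card := Set.ncard_coe_finset Gf
  have hdistB : A.graph.dist x z ≤ B.ncard + 1 := by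
    obtain ⟨W, hW⟩ := alpha A hl' B.ncard x z hx hz hxz hxl hzl rfl
    exact le_trans (SimpleGraph.dist_le W) hW
  have hGcard : Gf.card = r - 1 := by omega
  have hsurjA := Finset.surj_on_of_inj_on_of_card_le (s := Gf) (t := Finset.Icc 1 (r - 1))
    (fun g h => aV g h) haVmem haVinj (by rw [Nat.card_Icc]; omega)
  have hsurjD := Finset.surj_on_of_inj_on_of_card_le (s := Gf) (t := Finset.Icc 2 r)
    (fun g h => dV g h) hdVmem hdVinj (by rw [Nat.card_Icc]; omega)
  obtain ⟨hne01, -, -, h0, hh0, hxh0, h1h0, -⟩ := hadj 0 (by omega)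
  rw [hv0] at hne01 hxh0
  have hv1x : v 1 ≠ x := Ne.symm hne01
  have hv1z : v 1 ≠ z := getVert_one_ne_end Q hQp h2
  have hv1l' : v 1 ∉ l' := hint (v 1) (hsupp 1 (by omega)) hv1x hv1z
  have hh0l' : h0 ≠ l' := fun he => hv1l' (by rw [he] at h1h0; exact h1h0)
  have chain : ∀ i, 1 ≤ i → i ≤ r - 1 → v i ∈ h0 := by
    intro i
    induction i with
    | zero => omega
    | succ j ihj =>
      intro h1j h2j
      by_cases hj0 : j = 0
      · subst hj0
        exact h1h0
      · have hvj : v j ∈ h0 := ihj (by omega) (by omega)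
        obtain ⟨g, hg, hjeq⟩ := hsurjA j (Finset.mem_Icc.mpr ⟨by omega, by omega⟩)
        replace hjeq : j = aV g hg := hjeq
        have hvjg : v j ∈ g := by rw [hjeq]; exact haVon g hg
        obtain ⟨g₂, hg₂, hjeq₂⟩ := hsurjD (j + 1) (Finset.mem_Icc.mpr ⟨by omega, by omega⟩)
        replace hjeq₂ : j + 1 = dV g₂ hg₂ := hjeq₂
        have hvjg₂ : v j ∈ g₂ := by
          have hh := hdVon g₂ hg₂
          rw [← hjeq₂] at hh
          simpa using hh
        have hFj1 : 0 < F g₂ (v (j + 1)) := by rw [hjeq₂]; exact hdVpos g₂ hg₂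
        have hgh0 : g ≠ h0 := fun e => ((hGf g hg).2.2.1) (by rw [e]; exact hxh0)
        have hg₂g : g₂ = g := by
          rcases third_line A (hGf g hg).1 hh0 (hGf g₂ hg₂).1 hgh0 hvjg hvj hvjg₂ with h | h
          · exact h
          · exact absurd (by rw [h]; exact hxh0) ((hGf g₂ hg₂).2.2.1)
        obtain ⟨-, -, -, m, hm, hmj, hmj1, -⟩ := hadj j (by omega)
        rcases third_line A (hGf g hg).1 hh0 hm hgh0 hvjg hvj hmj with h | h
        · exfalso
          rw [h, ← hg₂g] at hmj1
          have := (hFzero g₂ (A.isLine g₂ (hGf g₂ hg₂).1) _).mpr hmj1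
          linarith
        · rw [h] at hmj1
          exact hmj1
  have hvr1 : v (r - 1) ∈ h0 := chain (r - 1) (by omega) le_rfl
  obtain ⟨g, hg, hjeq⟩ := hsurjA (r - 1) (Finset.mem_Icc.mpr ⟨by omega, le_rfl⟩)
  replace hjeq : r - 1 = aV g hg := hjeq
  have hvrg : v (r - 1) ∈ g := by rw [hjeq]; exact haVon g hg
  obtain ⟨g₂, hg₂, hjeq₂⟩ := hsurjD r (Finset.mem_Icc.mpr ⟨h2, le_rfl⟩)
  replace hjeq₂ : r = dV g₂ hg₂ := hjeq₂
  have hFrpos : 0 < F g₂ (v r) := by rw [hjeq₂]; exact hdVpos g₂ hg₂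
  have hgh0 : g ≠ h0 := fun e => ((hGf g hg).2.2.1) (by rw [e]; exact hxh0)
  obtain ⟨-, -, -, m, hm, hmj, hmj1, -⟩ := hadj (r - 1) (by omega)
  have hidx : r - 1 + 1 = r := by omega
  rw [hidx, hvr] at hmj1
  rcases third_line A (hGf g hg).1 hh0 hm hgh0 hvrg hvr1 hmj with h | h
  · rw [h] at hmj1
    exact ((hGf g hg).2.2.2.1) hmj1
  · rw [h] at hmj1
    exact hh0l' (line_unique A hh0 hl' hxz hxh0 hmj1 hxl hzl)

open SimpleGraph SimpleGraph.Walk in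
lemma main_aux (v : ℝ × ℝ) :
    ∀ (x : ℝ × ℝ) (W : A.graph.Walk x v), W.IsPath → W.length = A.graph.dist x v →
      x ∈ A.verts → {l | l ∈ A.lines ∧ ∃ w ∈ W.support, w ∈ l}.ncard = W.length + 2 := by
  intro x W
  induction W with
  | nil =>
    intro _ _ hx
    obtain ⟨l₁, l₂, h1, h2, hne, hp1, hp2, hset⟩ := lines_pair A hx
    simp only [support_nil, List.mem_singleton, exists_eq_left, length_nil]
    rw [hset, Set.ncard_pair hne]
  | @cons x y b h W' ih =>
    classical
    intro hpath hlen hxv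
    have hyv : y ∈ A.verts := h.2.2.1
    have hW'p : W'.IsPath := hpath.of_cons
    obtain ⟨Wd, hWd⟩ := SimpleGraph.Reachable.exists_walk_length_eq_dist (⟨W'⟩ : A.graph.Reachable y b)
    have hdx : A.graph.dist x b ≤ 1 + A.graph.dist y b := by
      have hh := SimpleGraph.dist_le (cons h Wd)
      rw [length_cons, hWd] at hh
      omega
    have hdy : A.graph.dist y b ≤ W'.length := SimpleGraph.dist_le W'
    have hL : W'.length + 1 = A.graph.dist x b := by
      rw [← hlen, length_cons]
    have hlen' : W'.length = A.graph.dist y b := by omega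
    have hmain' := ih hW'p hlen' hyv
    obtain ⟨l₁, l₂, h1, h2, hne, hp1, hp2, hset⟩ := lines_pair A hxv
    have hm' := h.2.2.2
    obtain ⟨m, hm, hxm, hym, -⟩ := hm'
    have hmpair : m ∈ ({l₁, l₂} : Set (Set (ℝ × ℝ))) := by
      rw [← hset]
      exact ⟨hm, hxm⟩
    set L2 := if m = l₁ then l₂ else l₁ with hL2def
    have hL2 : L2 ∈ A.lines ∧ x ∈ L2 ∧ m ≠ L2 ∧
        ({l | l ∈ A.lines ∧ x ∈ l} = {m, L2}) := by
      rcases hmpair with hml | hml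
      · rw [hL2def, if_pos hml]
        subst hml
        exact ⟨h2, hp2, hne, hset⟩
      · simp only [Set.mem_singleton_iff] at hml
        have hmne : m ≠ l₁ := by rw [hml]; exact hne.symm
        rw [hL2def, if_neg hmne]
        subst hml
        refine ⟨h1, hp1, hne.symm, ?_⟩
        rw [hset, Set.pair_comm]
    set S' := {l | l ∈ A.lines ∧ ∃ w ∈ W'.support, w ∈ l} with hS'def
    have hL2S' : L2 ∉ S' := by
      rintro ⟨hL2l, w₀, hw₀s, hw₀L2⟩
      have hxW' : x ∉ W'.support := ((cons_isPath_iff h W').mp hpath).2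
      have hw₀x : w₀ ≠ x := fun e => hxW' (e ▸ hw₀s)
      obtain ⟨c, Q, R, hpc, hQp, hQint, hQ1, hQgv, hQR, hQsub⟩ :=
        firstVert (fun w => w ∈ L2 ∧ w ≠ x) (cons h W') hpath
          ⟨w₀, by simp only [support_cons, List.mem_cons]; exact Or.inr hw₀s, hw₀L2, hw₀x⟩
          (by simp)
      obtain ⟨hcL2, hcx⟩ := hpc
      have hdxc : A.graph.dist x c ≤ Q.length := SimpleGraph.dist_le Q
      have hQlen : Q.length = A.graph.dist x c := by
        by_contra hne2
        have hlt : A.graph.dist x c < Q.length := lt_of_le_of_ne hdxc (Ne.symm hne2)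
        obtain ⟨X, hX⟩ := SimpleGraph.Reachable.exists_walk_length_eq_dist (⟨Q⟩ : A.graph.Reachable x c)
        have hXR := SimpleGraph.dist_le (X.append R)
        rw [length_append, hX] at hXR
        have hRd : A.graph.dist c b ≤ R.length := SimpleGraph.dist_le R
        have hcons : (cons h W').length = A.graph.dist x b := hlen
        rw [length_cons] at hcons hQR
        omega
      have hQne1 : Q.length ≠ 1 := by
        intro h1len
        have hcy : c = y := by
          have hgv : Q.getVert 1 = c := by
            rw [← h1len]
            exact Q.getVert_length
          rw [hgv, getVert_cons_one] at hQgv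
          exact hQgv
        subst hcy
        exact hL2.2.2.1 (line_unique A hm hL2.1 h.ne hxm hym hL2.2.1 hcL2)
      have h2Q : 2 ≤ Q.length := by omega
      have hcv : c ∈ A.verts := by
        have hadj := Q.adj_getVert_succ (i := Q.length - 1) (by omega)
        have hgv : Q.getVert (Q.length - 1 + 1) = c := by
          rw [show Q.length - 1 + 1 = Q.length by omega]
          exact Q.getVert_length
        rw [hgv] at hadj
        exact hadj.2.2.1
      exact key A hL2.1 hxv hcv (Ne.symm hcx) hL2.2.1 hcL2 Q hQp hQlen
        (fun w hw hwx hwc hwL2 => hQint w hw hwc ⟨hwL2, hwx⟩) h2Q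
    have hSfin : S'.Finite := A.lines.finite_toSet.subset (fun l hl => hl.1)
    have hmS' : m ∈ S' := ⟨hm, y, W'.start_mem_support, hym⟩
    have hSeq : {l | l ∈ A.lines ∧ ∃ w ∈ (cons h W').support, w ∈ l} = insert L2 S' := by
      ext l
      simp only [support_cons, List.mem_cons, Set.mem_setOf_eq, Set.mem_insert_iff]
      constructor
      · rintro ⟨hl, w, hw | hw, hwl⟩
        · subst hw
          have hlp : l ∈ ({m, L2} : Set (Set (ℝ × ℝ))) := by
            rw [← hL2.2.2.2]
            exact ⟨hl, hwl⟩
          rcases hlp with hlp | hlp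
          · subst hlp
            exact Or.inr hmS'
          · simp only [Set.mem_singleton_iff] at hlp
            exact Or.inl hlp
        · exact Or.inr ⟨hl, w, hw, hwl⟩
      · rintro (rfl | hl)
        · exact ⟨hL2.1, x, Or.inl rfl, hL2.2.1⟩
        · obtain ⟨hl1, w, hw, hwl⟩ := hl
          exact ⟨hl1, w, Or.inr hw, hwl⟩
    rw [hSeq, Set.ncard_insert_of_notMem hL2S' hSfin]
    rw [hS'def] at hmain'
    rw [hmain', length_cons]

end SLAaux

theorem shortest_path_lines_count (n : ℕ) (hn : 3 ≤ n) (A : SimpleLineArrangement n)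
    (u v : ℝ × ℝ) (hu : u ∈ A.verts) (hv : v ∈ A.verts) (huv : u ≠ v)
    (P : A.graph.Walk u v) (hP : P.IsPath) (hlen : P.length = A.graph.dist u v) :
    {l | l ∈ A.lines ∧ ∃ w ∈ P.support, w ∈ l}.ncard = P.length + 2 :=
  SLAaux.main_aux A v u P hP hlen hu
end

section
/- Let L be a simple line arrangement of n ≥ 3 lines and let u = l1 ∩ l2 and v = l3 ∩ l4 be vertices of G_L with {l1,l2} ∩ {l3,l4} = ∅ (that is, u and v do not lie on a common line of L). Let Q_v be the intersection of the closed half-plane bounded by l1 containing v with the closed half-plane bounded by l2 containing v, and define Q_u analogously with l3, l4 and u. Then every vertex of every shortest u,v-path in G_L lies in Q_u ∩ Q_v. -/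
/-- `H` is one of the two closed half-planes bounded by the line `l`. -/
def IsClosedHalfplaneOf (H l : Set (ℝ × ℝ)) : Prop :=
  ∃ a b c : ℝ, (a, b) ≠ (0, 0) ∧ l = {p : ℝ × ℝ | a * p.1 + b * p.2 = c} ∧
    (H = {p : ℝ × ℝ | a * p.1 + b * p.2 ≤ c} ∨ H = {p : ℝ × ℝ | c ≤ a * p.1 + b * p.2})


section Aux

/-- affine functional property -/
def AffOn (f : ℝ × ℝ → ℝ) : Prop :=
  ∀ a b : ℝ, a + b = 1 → ∀ x y : ℝ × ℝ, f (a • x + b • y) = a * f x + b * f y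

lemma affOn_shape (a b c : ℝ) : AffOn (fun p => a * p.1 + b * p.2 + c) := by
  intro s t hst x y
  simp only [Prod.fst_add, Prod.snd_add, Prod.smul_fst, Prod.smul_snd, smul_eq_mul]
  linear_combination (-c) * hst

lemma isLine_exists_fun {l : Set (ℝ × ℝ)} (hl : IsLine l) :
    ∃ f : ℝ × ℝ → ℝ, (∀ p, p ∈ l ↔ f p = 0) ∧ AffOn f := by
  obtain ⟨a, b, c, -, rfl⟩ := hl
  refine ⟨fun p => a * p.1 + b * p.2 + (-c), fun p => ?_, affOn_shape a b (-c)⟩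
  simp only [Set.mem_setOf_eq]
  constructor <;> intro h <;> linarith

open Classical in
noncomputable def lineFun (l : Set (ℝ × ℝ)) : ℝ × ℝ → ℝ :=
  if h : ∃ f : ℝ × ℝ → ℝ, (∀ p, p ∈ l ↔ f p = 0) ∧ AffOn f then h.choose else 0

lemma lineFun_spec {l : Set (ℝ × ℝ)} (hl : IsLine l) :
    (∀ p, p ∈ l ↔ lineFun l p = 0) ∧ AffOn (lineFun l) := by
  rw [lineFun, dif_pos (isLine_exists_fun hl)]
  exact (isLine_exists_fun hl).choose_spec

lemma affOn_openSegment {f : ℝ × ℝ → ℝ} (hf : AffOn f) {x y z : ℝ × ℝ}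
    (hz : z ∈ openSegment ℝ x y) :
    ∃ a b : ℝ, 0 < a ∧ 0 < b ∧ a + b = 1 ∧ f z = a * f x + b * f y := by
  obtain ⟨a, b, ha, hb, hab, rfl⟩ := hz
  exact ⟨a, b, ha, hb, hab, hf a b hab x y⟩

lemma exists_zero_openSegment {f : ℝ × ℝ → ℝ} (hf : AffOn f) {x y : ℝ × ℝ}
    (hx : 0 < f x) (hy : f y < 0) : ∃ z ∈ openSegment ℝ x y, f z = 0 := by
  have hd : 0 < f x - f y := by linarith
  refine ⟨(-f y / (f x - f y)) • x + (f x / (f x - f y)) • y,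
    ⟨-f y / (f x - f y), f x / (f x - f y), by apply div_pos <;> linarith, by apply div_pos <;> linarith, ?_, rfl⟩, ?_⟩
  · rw [← add_div, div_eq_one_iff_eq hd.ne']; ring
  · rw [hf _ _ (by rw [← add_div, div_eq_one_iff_eq hd.ne']; ring)]
    field_simp
    ring

lemma sbtw_of_openSegment {x y z : ℝ × ℝ} (h : y ∈ openSegment ℝ x z) (h1 : y ≠ x)
    (h2 : y ≠ z) : Sbtw ℝ x y z :=
  ⟨mem_segment_iff_wbtw.1 (openSegment_subset_segment ℝ x z h), h1, h2⟩

lemma openSegment_of_sbtw {x y z : ℝ × ℝ} (h : Sbtw ℝ x y z) : y ∈ openSegment ℝ x z :=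
  mem_openSegment_of_ne_left_right h.left_ne h.right_ne h.wbtw.mem_segment

lemma sbtw_norm_lt {x y z : ℝ × ℝ} (h : Sbtw ℝ x y z) : ‖y - x‖ < ‖z - x‖ := by
  obtain ⟨t, ht, hy⟩ := h.mem_image_Ioo
  have hyx : y - x = t • (z - x) := by
    rw [← hy, AffineMap.lineMap_apply_module]
    module
  have hzx : (0:ℝ) < ‖z - x‖ := by
    rw [norm_pos_iff, sub_ne_zero]
    exact h.left_ne_right.symm
  rw [hyx, norm_smul, Real.norm_eq_abs, abs_of_pos ht.1]
  nlinarith [ht.2]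

end Aux

namespace SimpleGraph.Walk
variable {V : Type*} {G : SimpleGraph V}

def takeN {u v : V} : (W : G.Walk u v) → (j : ℕ) → G.Walk u (W.getVert j)
  | W, 0 => (Walk.nil' u).copy rfl (W.getVert_zero).symm
  | .nil, _ + 1 => Walk.nil' u
  | .cons h W, j + 1 => Walk.cons h (W.takeN j)

def dropN {u v : V} : (W : G.Walk u v) → (j : ℕ) → G.Walk (W.getVert j) v
  | W, 0 => W.copy (W.getVert_zero).symm rfl
  | .nil, _ + 1 => Walk.nil' u
  | .cons _ W, j + 1 => W.dropN j

@[simp] lemma length_takeN {u v : V} : (W : G.Walk u v) → (j : ℕ) → j ≤ W.length →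
    (W.takeN j).length = j
  | _, 0, _ => by simp [takeN]
  | .nil, j + 1, h => by simp at h
  | .cons h W, j + 1, hj => by
      simp only [takeN, length_cons]
      exact congrArg Nat.succ (length_takeN W j (by simpa using hj))

@[simp] lemma length_dropN {u v : V} : (W : G.Walk u v) → (j : ℕ) →
    (W.dropN j).length = W.length - j
  | _, 0 => by simp [dropN]
  | .nil, j + 1 => by simp [dropN]
  | .cons h W, j + 1 => by simp [dropN, length_dropN W j]

end SimpleGraph.Walk
section Arr
open Set SimpleGraph

variable {n : ℕ}

lemma SLA.inter_eq (A : SimpleLineArrangement n) {l m : Set (ℝ × ℝ)} (hl : l ∈ A.lines)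
    (hm : m ∈ A.lines) (hne : l ≠ m) {x y : ℝ × ℝ} (hx1 : x ∈ l) (hx2 : x ∈ m)
    (hy1 : y ∈ l) (hy2 : y ∈ m) : x = y := by
  obtain ⟨p, -, hp⟩ := A.meet l hl m hm hne
  rw [hp x ⟨hx1, hx2⟩, hp y ⟨hy1, hy2⟩]

open Classical in
noncomputable def SLA.otherLine (A : SimpleLineArrangement n) (l0 : Set (ℝ × ℝ))
    (x : ℝ × ℝ) : Set (ℝ × ℝ) :=
  if h : ∃ l', l' ∈ A.lines ∧ l' ≠ l0 ∧ x ∈ l' then h.choose else ∅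

lemma SLA.otherLine_spec (A : SimpleLineArrangement n) {l0 : Set (ℝ × ℝ)} {x : ℝ × ℝ}
    (hx : x ∈ A.verts) :
    SLA.otherLine A l0 x ∈ A.lines ∧ SLA.otherLine A l0 x ≠ l0 ∧ x ∈ SLA.otherLine A l0 x := by
  have h : ∃ l', l' ∈ A.lines ∧ l' ≠ l0 ∧ x ∈ l' := by
    obtain ⟨m1, hm1, m2, hm2, hne, hx1, hx2⟩ := hx
    by_cases h1 : m1 = l0
    · exact ⟨m2, hm2, by rw [← h1]; exact hne.symm, hx2⟩
    · exact ⟨m1, hm1, h1, hx1⟩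
  rw [SLA.otherLine, dif_pos h]
  exact h.choose_spec

lemma SLA.finite_verts_on_line (A : SimpleLineArrangement n) {l0 : Set (ℝ × ℝ)}
    (hl0 : l0 ∈ A.lines) : {x | x ∈ A.verts ∧ x ∈ l0}.Finite := by
  apply Set.Finite.of_finite_image (f := SLA.otherLine A l0)
  · apply A.lines.finite_toSet.subset
    rintro - ⟨x, hx, rfl⟩
    exact (SLA.otherLine_spec A hx.1).1
  · intro x hx y hy hxy
    obtain ⟨hlx, hlxne, hxin⟩ := SLA.otherLine_spec A hx.1
    obtain ⟨hly, hlyne, hyin⟩ := SLA.otherLine_spec A hy.1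
    rw [hxy] at hxin
    exact SLA.inter_eq A hly hl0 hlyne hxin hx.2 hyin hy.2

lemma SLA.no_cross (A : SimpleLineArrangement n) {l' : Set (ℝ × ℝ)} (hl' : l' ∈ A.lines)
    {f' : ℝ × ℝ → ℝ} (hf'0 : ∀ p, p ∈ l' ↔ f' p = 0) (hf'a : AffOn f')
    {y z : ℝ × ℝ} (hadj : A.graph.Adj y z) (hy : 0 < f' y) (hz : f' z < 0) : False := by
  obtain ⟨hne, hyv, hzv, e, he, hye, hze, hbet⟩ := hadj
  have hel' : e ≠ l' := by
    rintro rfl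
    rw [(hf'0 y).1 hye] at hy
    exact lt_irrefl 0 hy
  obtain ⟨z0, hz0seg, hz0⟩ := exists_zero_openSegment hf'a hy hz
  obtain ⟨fe, hfe0, hfea⟩ := isLine_exists_fun (A.isLine e he)
  have hz0e : z0 ∈ e := by
    obtain ⟨a, b, ha, hb, hab, hfz0⟩ := affOn_openSegment hfea hz0seg
    rw [hfe0, hfz0, (hfe0 y).1 hye, (hfe0 z).1 hze]
    ring
  have hz0l' : z0 ∈ l' := (hf'0 z0).2 hz0
  have hz0v : z0 ∈ A.verts := ⟨e, he, l', hl', hel', hz0e, hz0l'⟩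
  refine hbet z0 hz0v hz0e (sbtw_of_openSegment hz0seg ?_ ?_)
  · intro h; rw [h] at hz0; linarith
  · intro h; rw [h] at hz0; linarith

lemma SLA.exists_short_walk (A : SimpleLineArrangement n) {l0 : Set (ℝ × ℝ)}
    (hl0 : l0 ∈ A.lines) :
    ∀ m : ℕ, ∀ p q : ℝ × ℝ, p ∈ A.verts → q ∈ A.verts → p ∈ l0 → q ∈ l0 → p ≠ q →
    {x | x ∈ A.verts ∧ x ∈ l0 ∧ Sbtw ℝ p x q}.ncard ≤ m →
    ∃ W : A.graph.Walk p q, W.length ≤ m + 1 := by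
  intro m
  induction m with
  | zero =>
    intro p q hpv hqv hpl hql hpq hcard
    have hfin : {x | x ∈ A.verts ∧ x ∈ l0 ∧ Sbtw ℝ p x q}.Finite :=
      (SLA.finite_verts_on_line A hl0).subset (fun x hx => ⟨hx.1, hx.2.1⟩)
    have hemp : {x | x ∈ A.verts ∧ x ∈ l0 ∧ Sbtw ℝ p x q} = ∅ := by
      rw [← Set.ncard_eq_zero hfin]; omega
    have hadj : A.graph.Adj p q :=
      ⟨hpq, hpv, hqv, l0, hl0, hpl, hql, fun w hwv hwl hsb =>
        Set.eq_empty_iff_forall_notMem.1 hemp w ⟨hwv, hwl, hsb⟩⟩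
    exact ⟨hadj.toWalk, by simp⟩
  | succ m ih =>
    intro p q hpv hqv hpl hql hpq hcard
    have hfin : {x | x ∈ A.verts ∧ x ∈ l0 ∧ Sbtw ℝ p x q}.Finite :=
      (SLA.finite_verts_on_line A hl0).subset (fun x hx => ⟨hx.1, hx.2.1⟩)
    by_cases hB : {x | x ∈ A.verts ∧ x ∈ l0 ∧ Sbtw ℝ p x q} = ∅
    · have hadj : A.graph.Adj p q :=
        ⟨hpq, hpv, hqv, l0, hl0, hpl, hql, fun w hwv hwl hsb =>
          Set.eq_empty_iff_forall_notMem.1 hB w ⟨hwv, hwl, hsb⟩⟩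
      exact ⟨hadj.toWalk, by simp⟩
    · obtain ⟨z, hzB, hzmin⟩ := hfin.toFinset.exists_min_image (fun x => ‖x - p‖)
        (by rw [Set.Finite.toFinset_nonempty]; exact Set.nonempty_iff_ne_empty.2 hB)
      rw [Set.Finite.mem_toFinset] at hzB
      obtain ⟨hzv, hzl, hzs⟩ := hzB
      have hadj : A.graph.Adj p z := by
        refine ⟨hzs.ne_left.symm, hpv, hzv, l0, hl0, hpl, hzl, fun w hwv hwl hsb => ?_⟩
        have hwB : w ∈ {x | x ∈ A.verts ∧ x ∈ l0 ∧ Sbtw ℝ p x q} :=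
          ⟨hwv, hwl, hzs.trans_left hsb⟩
        have := hzmin w (by rwa [Set.Finite.mem_toFinset])
        have := sbtw_norm_lt hsb
        linarith
      have hsub : {x | x ∈ A.verts ∧ x ∈ l0 ∧ Sbtw ℝ z x q} ⊆
          {x | x ∈ A.verts ∧ x ∈ l0 ∧ Sbtw ℝ p x q} \ {z} := by
        rintro w ⟨hwv, hwl, hws⟩
        exact ⟨⟨hwv, hwl, hzs.trans_right hws⟩, by simpa using hws.ne_left⟩
      have hcard2 : {x | x ∈ A.verts ∧ x ∈ l0 ∧ Sbtw ℝ z x q}.ncard ≤ m := by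
        have h1 : ({x | x ∈ A.verts ∧ x ∈ l0 ∧ Sbtw ℝ p x q} \ {z}).ncard =
            {x | x ∈ A.verts ∧ x ∈ l0 ∧ Sbtw ℝ p x q}.ncard - 1 :=
          Set.ncard_diff_singleton_of_mem ⟨hzv, hzl, hzs⟩
        have h2 := Set.ncard_le_ncard hsub hfin.diff
        have h3 : 1 ≤ {x | x ∈ A.verts ∧ x ∈ l0 ∧ Sbtw ℝ p x q}.ncard :=
          (Set.ncard_pos hfin).2 ⟨z, hzv, hzl, hzs⟩
        omega
      obtain ⟨W, hW⟩ := ih z q hzv hqv hzl hql hzs.ne_right hcard2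
      exact ⟨W.cons hadj, by simpa using Nat.succ_le_succ hW⟩

end Arr

lemma sum_le_two_special (D : ℕ → ℤ) (E : ℕ) (hE : 2 ≤ E)
    (hgen : ∀ j < E, D j ≤ 2) (h0 : D 0 ≤ 1) (hlast : D (E - 1) ≤ 0) :
    ∑ j ∈ Finset.range E, D j ≤ 2 * E - 3 := by
  classical
  set T : Finset ℕ := {0, E - 1} with hT
  have hTsub : T ⊆ Finset.range E := by
    intro x hx
    simp only [hT, Finset.mem_insert, Finset.mem_singleton] at hx
    rcases hx with rfl | rfl <;> simp [Finset.mem_range] <;> omega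
  have hTcard : T.card = 2 := by
    rw [hT, Finset.card_insert_of_notMem (by simp; omega), Finset.card_singleton]
  have hsplit := Finset.sum_sdiff (f := D) hTsub
  have hTsum : ∑ j ∈ T, D j = D 0 + D (E - 1) := by
    rw [hT, Finset.sum_pair (by omega)]
  have hrest : ∑ j ∈ Finset.range E \ T, D j ≤ (Finset.range E \ T).card • (2 : ℤ) :=
    Finset.sum_le_card_nsmul _ _ _ (fun x hx => hgen x (Finset.mem_range.1 (Finset.mem_sdiff.1 hx).1))
  have hcard : (Finset.range E \ T).card = E - 2 := by
    rw [Finset.card_sdiff_of_subset hTsub, Finset.card_range, hTcard]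
  rw [← hsplit, hTsum]
  rw [hcard] at hrest
  have : ((E - 2 : ℕ) : ℤ) = (E : ℤ) - 2 := by omega
  rw [nsmul_eq_mul, this] at hrest
  linarith

lemma sum_le_three_special (D : ℕ → ℤ) (E t : ℕ) (ht0 : 0 < t) (htE : t < E - 1)
    (hgen : ∀ j < E, D j ≤ 2) (h0 : D 0 ≤ 1) (ht : D t ≤ 1) (hlast : D (E - 1) ≤ 1) :
    ∑ j ∈ Finset.range E, D j ≤ 2 * E - 3 := by
  classical
  have hE : 3 ≤ E := by omega
  set T : Finset ℕ := {0, t, E - 1} with hT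
  have hTsub : T ⊆ Finset.range E := by
    intro x hx
    simp only [hT, Finset.mem_insert, Finset.mem_singleton] at hx
    rcases hx with rfl | rfl | rfl <;> simp [Finset.mem_range] <;> omega
  have hTcard : T.card = 3 := by
    rw [hT]
    rw [Finset.card_insert_of_notMem (by simp; omega),
      Finset.card_insert_of_notMem (by simp; omega), Finset.card_singleton]
  have hsplit := Finset.sum_sdiff (f := D) hTsub
  have hTsum : ∑ j ∈ T, D j = D 0 + (D t + D (E - 1)) := by
    rw [hT, Finset.sum_insert (by simp; omega), Finset.sum_pair (by omega)]
  have hrest : ∑ j ∈ Finset.range E \ T, D j ≤ (Finset.range E \ T).card • (2 : ℤ) :=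
    Finset.sum_le_card_nsmul _ _ _ (fun x hx => hgen x (Finset.mem_range.1 (Finset.mem_sdiff.1 hx).1))
  have hcard : (Finset.range E \ T).card = E - 3 := by
    rw [Finset.card_sdiff_of_subset hTsub, Finset.card_range, hTcard]
  rw [← hsplit, hTsum]
  rw [hcard] at hrest
  have : ((E - 3 : ℕ) : ℤ) = (E : ℤ) - 3 := by omega
  rw [nsmul_eq_mul, this] at hrest
  linarith
section Dip
open Set SimpleGraph

variable {n : ℕ}

lemma SLA.dip_bound (A : SimpleLineArrangement n) {l0 : Set (ℝ × ℝ)} (hl0 : l0 ∈ A.lines)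
    {f : ℝ × ℝ → ℝ} (hf0 : ∀ p, p ∈ l0 ↔ f p = 0) (hfa : AffOn f)
    {u v : ℝ × ℝ} (W : A.graph.Walk u v) (s r : ℕ) (hsr : s + 2 ≤ r) (hrE : r ≤ W.length)
    (hneg : ∀ j, s < j → j < r → f (W.getVert j) < 0)
    (hp'l0 : W.getVert s ∈ l0) (hq'l0 : W.getVert r ∈ l0)
    (hpq : W.getVert s ≠ W.getVert r) :
    2 * (({x | x ∈ A.verts ∧ x ∈ l0 ∧ Sbtw ℝ (W.getVert s) x (W.getVert r)}.ncard : ℤ))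
      ≤ 2 * ((r : ℤ) - s) - 3 := by
  classical
  set B := {x | x ∈ A.verts ∧ x ∈ l0 ∧ Sbtw ℝ (W.getVert s) x (W.getVert r)} with hB
  have hBfin : B.Finite :=
    (SLA.finite_verts_on_line A hl0).subset (fun x hx => ⟨hx.1, hx.2.1⟩)
  set Bf := hBfin.toFinset with hBf
  set L : (ℝ × ℝ) → Set (ℝ × ℝ) := fun x => SLA.otherLine A l0 x with hL
  set F : (ℝ × ℝ) → (ℝ × ℝ) → ℝ := fun x => lineFun (SLA.otherLine A l0 x) with hF
  set g : (ℝ × ℝ) → (ℝ × ℝ) → ℤ := fun x w =>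
    if 0 < F x w * F x (W.getVert r) then 2 else if F x w = 0 then 1 else 0 with hg
  set φ : (ℝ × ℝ) → ℤ := fun w => ∑ x ∈ Bf, g x w with hφ
  have hmemBf : ∀ x, x ∈ Bf → x ∈ B := by
    intro x hx; rwa [hBf, Set.Finite.mem_toFinset] at hx
  have hxB : ∀ x ∈ B, x ∈ A.verts ∧ x ∈ l0 ∧ Sbtw ℝ (W.getVert s) x (W.getVert r) := by
    intro x hx; rwa [hB] at hx
  have hLmem : ∀ x ∈ B, L x ∈ A.lines ∧ L x ≠ l0 ∧ x ∈ L x := by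
    intro x hx; exact SLA.otherLine_spec A (hxB x hx).1
  have hFprop : ∀ x ∈ B, (∀ p, p ∈ L x ↔ F x p = 0) ∧ AffOn (F x) := by
    intro x hx; exact lineFun_spec (A.isLine _ (hLmem x hx).1)
  have hFq' : ∀ x ∈ B, F x (W.getVert r) ≠ 0 := by
    intro x hx h0
    have hq'mem : W.getVert r ∈ L x := ((hFprop x hx).1 _).2 h0
    have hxq : x = W.getVert r :=
      SLA.inter_eq A (hLmem x hx).1 hl0 (hLmem x hx).2.1 (hLmem x hx).2.2 (hxB x hx).2.1
        hq'mem hq'l0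
    exact (hxB x hx).2.2.ne_right hxq
  have hgq' : ∀ x ∈ B, g x (W.getVert r) = 2 := by
    intro x hx
    simp only [hg]
    rw [if_pos (mul_self_pos.2 (hFq' x hx))]
  have hFp' : ∀ x ∈ B, F x (W.getVert s) * F x (W.getVert r) < 0 := by
    intro x hx
    obtain ⟨a, b, ha, hb, hab, hcomb⟩ :=
      affOn_openSegment (hFprop x hx).2 (openSegment_of_sbtw (hxB x hx).2.2)
    have hx0 : F x x = 0 := ((hFprop x hx).1 x).1 (hLmem x hx).2.2
    rw [hx0] at hcomb
    have hq := hFq' x hx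
    have hsq : 0 < (F x (W.getVert r))^2 :=
      lt_of_le_of_ne (sq_nonneg _) (Ne.symm (pow_ne_zero 2 hq))
    have hkey : a * (F x (W.getVert s) * F x (W.getVert r)) = -(b * (F x (W.getVert r))^2) := by
      linear_combination (-(F x (W.getVert r))) * hcomb
    by_contra hcon
    push_neg at hcon
    have h1 : 0 ≤ a * (F x (W.getVert s) * F x (W.getVert r)) := mul_nonneg ha.le hcon
    have h2 : 0 < b * (F x (W.getVert r))^2 := mul_pos hb hsq
    linarith
  have hgp' : ∀ x ∈ B, g x (W.getVert s) = 0 := by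
    intro x hx
    have h1 := hFp' x hx
    have h2 : F x (W.getVert s) ≠ 0 := by
      intro h; rw [h, zero_mul] at h1; exact lt_irrefl 0 h1
    simp only [hg]
    rw [if_neg (not_lt.2 h1.le), if_neg h2]
  have hgrange : ∀ (x w : ℝ × ℝ), 0 ≤ g x w ∧ g x w ≤ 2 := by
    intro x w; simp only [hg]; split_ifs <;> omega
  -- per-x edge bound
  have hedge : ∀ y z : ℝ × ℝ, A.graph.Adj y z → ∀ e, e ∈ A.lines → y ∈ e → z ∈ e →
      ∀ x ∈ B, g x z - g x y ≤ if (y ∈ L x ∨ z ∈ L x) ∧ L x ≠ e then 1 else 0 := by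
    intro y z hadj e he hye hze x hx
    obtain ⟨hFx0, hFxa⟩ := hFprop x hx
    by_cases hLe : L x = e
    · rw [if_neg (by simp [hLe])]
      have hy0 : F x y = 0 := (hFx0 y).1 (hLe ▸ hye)
      have hz0 : F x z = 0 := (hFx0 z).1 (hLe ▸ hze)
      simp only [hg]
      rw [hy0, hz0]
      simp
    · by_cases hymem : y ∈ L x
      · rw [if_pos ⟨Or.inl hymem, hLe⟩]
        have hy0 : F x y = 0 := (hFx0 y).1 hymem
        have hgy : g x y = 1 := by
          simp only [hg]; rw [hy0, zero_mul, if_neg (lt_irrefl 0), if_pos rfl]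
        have := (hgrange x z).2
        omega
      · by_cases hzmem : z ∈ L x
        · rw [if_pos ⟨Or.inr hzmem, hLe⟩]
          have hz0 : F x z = 0 := (hFx0 z).1 hzmem
          have hgz : g x z = 1 := by
            simp only [hg]; rw [hz0, zero_mul, if_neg (lt_irrefl 0), if_pos rfl]
          have := (hgrange x y).1
          omega
        · rw [if_neg (by tauto)]
          have hyne : F x y ≠ 0 := fun h => hymem ((hFx0 y).2 h)
          have hzne : F x z ≠ 0 := fun h => hzmem ((hFx0 z).2 h)
          have key : 0 < F x z * F x (W.getVert r) → 0 < F x y * F x (W.getVert r) := by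
            intro hz2
            by_contra hy2
            have hy2' : F x y * F x (W.getVert r) < 0 :=
              lt_of_le_of_ne (not_lt.1 hy2) (mul_ne_zero hyne (hFq' x hx))
            rcases lt_or_gt_of_ne (hFq' x hx) with hq | hq
            · have hzneg : F x z < 0 := by nlinarith
              have hypos : 0 < F x y := by nlinarith
              exact SLA.no_cross A (hLmem x hx).1 hFx0 hFxa hadj hypos hzneg
            · have hzpos : 0 < F x z := by nlinarith
              have hyneg : F x y < 0 := by nlinarith
              exact SLA.no_cross A (hLmem x hx).1 hFx0 hFxa (A.graph.adj_symm hadj) hzpos hyneg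
          by_cases hzc : 0 < F x z * F x (W.getVert r)
          · have hyc := key hzc
            have h1 : g x z = 2 := by simp only [hg]; rw [if_pos hzc]
            have h2 : g x y = 2 := by simp only [hg]; rw [if_pos hyc]
            omega
          · have h1 : g x z = 0 := by simp only [hg]; rw [if_neg hzc, if_neg hzne]
            have h2 := (hgrange x y).1
            omega
  -- edge bound for φ
  have hphi : ∀ y z : ℝ × ℝ, A.graph.Adj y z → ∀ e, e ∈ A.lines → y ∈ e → z ∈ e →
      φ z - φ y ≤ ((Bf.filter fun x => y ∈ L x ∧ L x ≠ e).card : ℤ) +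
        ((Bf.filter fun x => z ∈ L x ∧ L x ≠ e).card : ℤ) := by
    intro y z hadj e he hye hze
    have h1 : φ z - φ y = ∑ x ∈ Bf, (g x z - g x y) := by
      simp only [hφ]
      rw [Finset.sum_sub_distrib]
    rw [h1]
    have h2 : ∑ x ∈ Bf, (g x z - g x y) ≤
        ∑ x ∈ Bf, (if (y ∈ L x ∨ z ∈ L x) ∧ L x ≠ e then (1 : ℤ) else 0) :=
      Finset.sum_le_sum (fun x hx => hedge y z hadj e he hye hze x (hmemBf x hx))
    have h3 : ∑ x ∈ Bf, (if (y ∈ L x ∨ z ∈ L x) ∧ L x ≠ e then (1 : ℤ) else 0) =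
        ((Bf.filter fun x => (y ∈ L x ∨ z ∈ L x) ∧ L x ≠ e).card : ℤ) := by
      rw [Finset.sum_boole]
    have h4 : (Bf.filter fun x => (y ∈ L x ∨ z ∈ L x) ∧ L x ≠ e) =
        (Bf.filter fun x => y ∈ L x ∧ L x ≠ e) ∪ (Bf.filter fun x => z ∈ L x ∧ L x ≠ e) := by
      rw [← Finset.filter_or]
      apply Finset.filter_congr
      intro x _
      constructor
      · rintro ⟨hor, hne⟩; tauto
      · rintro (⟨h, hne⟩ | ⟨h, hne⟩) <;> exact ⟨by tauto, hne⟩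
    have h5 := Finset.card_union_le (Bf.filter fun x => y ∈ L x ∧ L x ≠ e)
      (Bf.filter fun x => z ∈ L x ∧ L x ≠ e)
    calc ∑ x ∈ Bf, (g x z - g x y) ≤ _ := h2
      _ = _ := h3
      _ ≤ _ := by rw [h4]; exact_mod_cast h5
  -- cardinality bounds
  have hU1 : ∀ (w : ℝ × ℝ) (e : Set (ℝ × ℝ)), w ∈ A.verts → e ∈ A.lines → w ∈ e →
      (Bf.filter fun x => w ∈ L x ∧ L x ≠ e).card ≤ 1 := by
    intro w e hwv he hwe
    rw [Finset.card_le_one]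
    intro x hx y hy
    rw [Finset.mem_filter] at hx hy
    obtain ⟨hxBf, hwLx, hLxe⟩ := hx
    obtain ⟨hyBf, hwLy, hLye⟩ := hy
    have hxB' := hmemBf x hxBf
    have hyB' := hmemBf y hyBf
    have hLL : L x = L y := by
      rcases A.simple w e he (L x) (hLmem x hxB').1 (L y) (hLmem y hyB').1 hwe hwLx hwLy with
        h | h | h
      · exact absurd h.symm hLxe
      · exact absurd h.symm hLye
      · exact h
    exact SLA.inter_eq A (hLmem x hxB').1 hl0 (hLmem x hxB').2.1 (hLmem x hxB').2.2
      (hxB x hxB').2.1 (hLL ▸ (hLmem y hyB').2.2) (hxB y hyB').2.1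
  have hU0 : ∀ (w : ℝ × ℝ) (e : Set (ℝ × ℝ)), w ∈ l0 → e ∈ A.lines → w ∈ e → e ≠ l0 →
      (Bf.filter fun x => w ∈ L x ∧ L x ≠ e) = ∅ := by
    intro w e hwl0 he hwe hel0
    rw [Finset.filter_eq_empty_iff]
    intro x hx
    rintro ⟨hwLx, hLxe⟩
    have hxB' := hmemBf x hx
    rcases A.simple w l0 hl0 e he (L x) (hLmem x hxB').1 hwl0 hwe hwLx with h | h | h
    · exact hel0 h.symm
    · exact (hLmem x hxB').2.1 h.symm
    · exact hLxe h.symm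
  -- first edge
  have hsE : s < W.length := by omega
  have hadj0 : A.graph.Adj (W.getVert s) (W.getVert (s + 1)) := W.adj_getVert_succ hsE
  obtain ⟨-, hp'v, hy1v, c, hc, hp'c, hy1c, -⟩ := id hadj0
  have hy1neg : f (W.getVert (s + 1)) < 0 := hneg (s + 1) (by omega) (by omega)
  have hy1nl0 : W.getVert (s + 1) ∉ l0 := fun h => absurd ((hf0 _).1 h) (by linarith)
  have hcl0 : c ≠ l0 := fun h => hy1nl0 (h ▸ hy1c)
  have hUc : ∀ (w : ℝ × ℝ) (e : Set (ℝ × ℝ)), w ∈ c → e ∈ A.lines → w ∈ e → e ≠ c →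
      (Bf.filter fun x => w ∈ L x ∧ L x ≠ e) = ∅ := by
    intro w e hwc he hwe hec
    rw [Finset.filter_eq_empty_iff]
    intro x hx
    rintro ⟨hwLx, hLxe⟩
    have hxB' := hmemBf x hx
    have hLxc : L x = c := by
      rcases A.simple w c hc e he (L x) (hLmem x hxB').1 hwc hwe hwLx with h | h | h
      · exact absurd h.symm hec
      · exact h.symm
      · exact absurd h.symm hLxe
    have hxp : x = W.getVert s :=
      SLA.inter_eq A hc hl0 hcl0 (hLxc ▸ (hLmem x hxB').2.2) (hxB x hxB').2.1 hp'c hp'l0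
    exact (hxB x hxB').2.2.ne_left hxp
  -- generic edge bound
  have hDgen : ∀ j, s ≤ j → j < r → φ (W.getVert (j + 1)) - φ (W.getVert j) ≤ 2 := by
    intro j h1 h2
    have hadj := W.adj_getVert_succ (show j < W.length by omega)
    obtain ⟨-, hyv, hzv, e, he, hye, hze, -⟩ := id hadj
    have h := hphi _ _ hadj e he hye hze
    have c1 := hU1 _ e hyv he hye
    have c2 := hU1 _ e hzv he hze
    have c1' : ((Bf.filter fun x => W.getVert j ∈ L x ∧ L x ≠ e).card : ℤ) ≤ 1 := by
      exact_mod_cast c1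
    have c2' : ((Bf.filter fun x => W.getVert (j + 1) ∈ L x ∧ L x ≠ e).card : ℤ) ≤ 1 := by
      exact_mod_cast c2
    linarith
  -- first edge bound
  have hD0 : φ (W.getVert (s + 1)) - φ (W.getVert s) ≤ 1 := by
    have h := hphi _ _ hadj0 c hc hp'c hy1c
    rw [hU0 _ c hp'l0 hc hp'c hcl0] at h
    have c2 := hU1 _ c hy1v hc hy1c
    have c2' : ((Bf.filter fun x => W.getVert (s + 1) ∈ L x ∧ L x ≠ c).card : ℤ) ≤ 1 := by
      exact_mod_cast c2
    simp only [Finset.card_empty, Nat.cast_zero, zero_add] at h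
    linarith
  -- last edge
  have hr1 : r - 1 + 1 = r := by omega
  have hadjr : A.graph.Adj (W.getVert (r - 1)) (W.getVert r) := by
    have := W.adj_getVert_succ (show r - 1 < W.length by omega)
    rwa [hr1] at this
  obtain ⟨-, hyr1v, hq'v, er, her, hyr1er, hq'er, -⟩ := id hadjr
  have hyr1neg : f (W.getVert (r - 1)) < 0 := hneg _ (by omega) (by omega)
  have hyr1nl0 : W.getVert (r - 1) ∉ l0 := fun h => absurd ((hf0 _).1 h) (by linarith)
  have herl0 : er ≠ l0 := fun h => hyr1nl0 (h ▸ hyr1er)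
  have hDlast1 : φ (W.getVert r) - φ (W.getVert (r - 1)) ≤ 1 := by
    have h := hphi _ _ hadjr er her hyr1er hq'er
    rw [hU0 _ er hq'l0 her hq'er herl0] at h
    have c1 := hU1 _ er hyr1v her hyr1er
    have c1' : ((Bf.filter fun x => W.getVert (r - 1) ∈ L x ∧ L x ≠ er).card : ℤ) ≤ 1 := by
      exact_mod_cast c1
    simp only [Finset.card_empty, Nat.cast_zero, add_zero] at h
    linarith
  -- telescoping
  have htel : ∑ j ∈ Finset.range (r - s),
      (φ (W.getVert (s + j + 1)) - φ (W.getVert (s + j))) =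
      φ (W.getVert r) - φ (W.getVert s) := by
    have h := Finset.sum_range_sub (fun j => φ (W.getVert (s + j))) (r - s)
    have h2 : s + (r - s) = r := by omega
    simp only [← Nat.add_assoc, Nat.add_zero] at h
    rw [h2] at h
    exact h
  have hsum2m : φ (W.getVert r) - φ (W.getVert s) = 2 * (Bf.card : ℤ) := by
    have h1 : φ (W.getVert r) - φ (W.getVert s) = ∑ x ∈ Bf, (g x (W.getVert r) - g x (W.getVert s)) := by
      simp only [hφ]
      rw [Finset.sum_sub_distrib]
    rw [h1]
    rw [Finset.sum_congr rfl (fun x hx => by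
      rw [hgq' x (hmemBf x hx), hgp' x (hmemBf x hx)])]
    rw [Finset.sum_const, nsmul_eq_mul]
    ring
  have hncard : (B.ncard : ℤ) = (Bf.card : ℤ) := by
    rw [← Set.Finite.coe_toFinset hBfin, Set.ncard_coe_finset]
  rw [hncard]
  set D : ℕ → ℤ := fun j => φ (W.getVert (s + j + 1)) - φ (W.getVert (s + j)) with hD
  have htel : ∑ j ∈ Finset.range (r - s), D j = φ (W.getVert r) - φ (W.getVert s) := by
    have h := Finset.sum_range_sub (fun j => φ (W.getVert (s + j))) (r - s)
    have h2 : s + (r - s) = r := by omega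
    simp only [← Nat.add_assoc, Nat.add_zero] at h
    rw [h2] at h
    simp only [hD]
    exact h
  have hsum2m : φ (W.getVert r) - φ (W.getVert s) = 2 * (Bf.card : ℤ) := by
    have h1 : φ (W.getVert r) - φ (W.getVert s) =
        ∑ x ∈ Bf, (g x (W.getVert r) - g x (W.getVert s)) := by
      simp only [hφ]
      rw [Finset.sum_sub_distrib]
    rw [h1]
    rw [Finset.sum_congr rfl (fun x hx => by
      rw [hgq' x (hmemBf x hx), hgp' x (hmemBf x hx)]; norm_num : ∀ x ∈ Bf,
        g x (W.getVert r) - g x (W.getVert s) = 2)]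
    rw [Finset.sum_const, nsmul_eq_mul]
    ring
  have hgen : ∀ j < r - s, D j ≤ 2 := by
    intro j hj
    simp only [hD]
    exact hDgen (s + j) (by omega) (by omega)
  have hD0' : D 0 ≤ 1 := by
    simp only [hD]
    simpa using hD0
  have hcast : ((r - s : ℕ) : ℤ) = (r : ℤ) - s := by omega
  by_cases hallc : ∀ j, s < j → j < r → W.getVert j ∈ c
  · have hyr1c : W.getVert (r - 1) ∈ c := hallc _ (by omega) (by omega)
    have herc : er ≠ c := by
      intro h
      exact hpq (SLA.inter_eq A hc hl0 hcl0 hp'c hp'l0 (h ▸ hq'er) hq'l0)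
    have hDlast0 : φ (W.getVert r) - φ (W.getVert (r - 1)) ≤ 0 := by
      have h := hphi _ _ hadjr er her hyr1er hq'er
      rw [hUc _ er hyr1c her hyr1er herc, hU0 _ er hq'l0 her hq'er herl0] at h
      simpa using h
    have hb := sum_le_two_special D (r - s) (by omega) hgen hD0'
      (by
        simp only [hD]
        have e1 : s + (r - s - 1) = r - 1 := by omega
        rw [e1, hr1]
        exact hDlast0)
    rw [htel, hsum2m, hcast] at hb
    linarith
  · push_neg at hallc
    obtain ⟨jj, hjj1, hjj2, hjj3⟩ := hallc
    have hexists : ∃ j, s < j ∧ j < r ∧ W.getVert j ∉ c := ⟨jj, hjj1, hjj2, hjj3⟩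
    have hj0spec := Nat.find_spec hexists
    set j0 := Nat.find hexists with hj0
    obtain ⟨hj0s, hj0r, hj0c⟩ := hj0spec
    have hj0s2 : s + 2 ≤ j0 := by
      by_contra h
      have he' : j0 = s + 1 := by omega
      rw [he'] at hj0c
      exact hj0c hy1c
    have hprev : W.getVert (j0 - 1) ∈ c := by
      by_contra hpc2
      exact Nat.find_min hexists (show j0 - 1 < j0 by omega) ⟨by omega, by omega, hpc2⟩
    have hj01 : j0 - 1 + 1 = j0 := by omega
    have hadjt : A.graph.Adj (W.getVert (j0 - 1)) (W.getVert j0) := by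
      have := W.adj_getVert_succ (show j0 - 1 < W.length by omega)
      rwa [hj01] at this
    obtain ⟨-, -, hzvt, et, het, hyet, hzet, -⟩ := id hadjt
    have hetc : et ≠ c := fun h => hj0c (h ▸ hzet)
    have hDt : φ (W.getVert j0) - φ (W.getVert (j0 - 1)) ≤ 1 := by
      have h := hphi _ _ hadjt et het hyet hzet
      rw [hUc _ et hprev het hyet hetc] at h
      have c2 := hU1 _ et hzvt het hzet
      have c2' : ((Bf.filter fun x => W.getVert j0 ∈ L x ∧ L x ≠ et).card : ℤ) ≤ 1 := by
        exact_mod_cast c2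
      simp only [Finset.card_empty, Nat.cast_zero, zero_add] at h
      linarith
    have hb := sum_le_three_special D (r - s) (j0 - 1 - s) (by omega) (by omega) hgen hD0'
      (by
        simp only [hD]
        have e1 : s + (j0 - 1 - s) = j0 - 1 := by omega
        rw [e1, hj01]
        exact hDt)
      (by
        simp only [hD]
        have e1 : s + (r - s - 1) = r - 1 := by omega
        rw [e1, hr1]
        exact hDlast1)
    rw [htel, hsum2m, hcast] at hb
    linarith

end Dip

section Main
open Set SimpleGraph

variable {n : ℕ}

lemma SLA.main_halfplane (A : SimpleLineArrangement n) {l0 : Set (ℝ × ℝ)} (hl0 : l0 ∈ A.lines)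
    {f : ℝ × ℝ → ℝ} (hf0 : ∀ p, p ∈ l0 ↔ f p = 0) (hfa : AffOn f)
    {u v : ℝ × ℝ} (hu : u ∈ l0) (hv : 0 < f v)
    (P : A.graph.Walk u v)
    (hmin : ∀ Q : A.graph.Walk u v, P.length ≤ Q.length) :
    ∀ w ∈ P.support, 0 ≤ f w := by
  classical
  by_contra hcon
  push_neg at hcon
  obtain ⟨w, hwsup, hwneg⟩ := hcon
  obtain ⟨i, hwi, hiE⟩ := SimpleGraph.Walk.mem_support_iff_exists_getVert.1 hwsup
  rw [← hwi] at hwneg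
  have hfu : f u = 0 := (hf0 u).1 hu
  have hi0 : 0 < i := by
    rcases Nat.eq_zero_or_pos i with h | h
    · rw [h, P.getVert_zero] at hwneg; linarith
    · exact h
  have hiE' : i < P.length := by
    rcases lt_or_eq_of_le hiE with h | h
    · exact h
    · rw [h, P.getVert_length] at hwneg; linarith
  have hQE : i < P.length ∧ 0 ≤ f (P.getVert P.length) :=
    ⟨hiE', by rw [P.getVert_length]; linarith⟩
  have hex : ∃ j, i < j ∧ 0 ≤ f (P.getVert j) := ⟨P.length, hQE⟩
  have hrspec := Nat.find_spec hex
  set r := Nat.find hex with hr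
  obtain ⟨hir, hr0⟩ := hrspec
  have hrE : r ≤ P.length := Nat.find_min' hex hQE
  have hsP : 0 ≤ f (P.getVert 0) := by rw [P.getVert_zero]; linarith
  set s := Nat.findGreatest (fun j => 0 ≤ f (P.getVert j)) (i - 1) with hs
  have hs0 : 0 ≤ f (P.getVert s) := by
    have h := Nat.findGreatest_spec (P := fun j => 0 ≤ f (P.getVert j)) (m := 0) (n := i - 1)
      (Nat.zero_le _) hsP
    rw [hs]
    exact h
  have hsi : s < i := by
    have := Nat.findGreatest_le (P := fun j => 0 ≤ f (P.getVert j)) (n := i - 1)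
    omega
  have hneg : ∀ j, s < j → j < r → f (P.getVert j) < 0 := by
    intro j h1 h2
    by_contra hge
    push_neg at hge
    rcases lt_trichotomy j i with h | h | h
    · exact Nat.findGreatest_is_greatest h1 (by omega) hge
    · rw [h] at hge; linarith
    · exact absurd ⟨h, hge⟩ (Nat.find_min hex h2)
  have hfp' : f (P.getVert s) = 0 := by
    rcases eq_or_lt_of_le hs0 with h | h
    · exact h.symm
    · exfalso
      have hadj := P.adj_getVert_succ (show s < P.length by omega)
      exact SLA.no_cross A hl0 hf0 hfa hadj h (hneg (s + 1) (by omega) (by omega))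
  have hfq' : f (P.getVert r) = 0 := by
    rcases eq_or_lt_of_le hr0 with h | h
    · exact h.symm
    · exfalso
      have hr1 : r - 1 + 1 = r := by omega
      have hadj := P.adj_getVert_succ (show r - 1 < P.length by omega)
      rw [hr1] at hadj
      exact SLA.no_cross A hl0 hf0 hfa (A.graph.adj_symm hadj) h
        (hneg (r - 1) (by omega) (by omega))
  have hp'l0 : P.getVert s ∈ l0 := (hf0 _).2 hfp'
  have hq'l0 : P.getVert r ∈ l0 := (hf0 _).2 hfq'
  have hsr : s + 2 ≤ r := by omega
  have hpq : P.getVert s ≠ P.getVert r := by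
    intro heq
    have hle := hmin ((P.takeN s).append ((P.dropN r).copy heq.symm rfl))
    rw [SimpleGraph.Walk.length_append, SimpleGraph.Walk.length_copy,
      SimpleGraph.Walk.length_takeN _ s (by omega), SimpleGraph.Walk.length_dropN] at hle
    omega
  have hBfin : {x | x ∈ A.verts ∧ x ∈ l0 ∧ Sbtw ℝ (P.getVert s) x (P.getVert r)}.Finite :=
    (SLA.finite_verts_on_line A hl0).subset (fun x hx => ⟨hx.1, hx.2.1⟩)
  set m := {x | x ∈ A.verts ∧ x ∈ l0 ∧ Sbtw ℝ (P.getVert s) x (P.getVert r)}.ncard with hm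
  have hp'v : P.getVert s ∈ A.verts := by
    obtain ⟨-, h', -⟩ := id (P.adj_getVert_succ (show s < P.length by omega))
    exact h'
  have hq'v : P.getVert r ∈ A.verts := by
    have hr1 : r - 1 + 1 = r := by omega
    have hadj := P.adj_getVert_succ (show r - 1 < P.length by omega)
    rw [hr1] at hadj
    obtain ⟨-, -, h', -⟩ := id hadj
    exact h'
  obtain ⟨Ws, hWs⟩ := SLA.exists_short_walk A hl0 m (P.getVert s) (P.getVert r) hp'v hq'v
    hp'l0 hq'l0 hpq le_rfl
  have hlen2 : r - s ≤ m + 1 := by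
    have hle := hmin ((P.takeN s).append (Ws.append (P.dropN r)))
    rw [SimpleGraph.Walk.length_append, SimpleGraph.Walk.length_append,
      SimpleGraph.Walk.length_takeN _ s (by omega), SimpleGraph.Walk.length_dropN] at hle
    omega
  have hdip := SLA.dip_bound A hl0 hf0 hfa P s r hsr hrE hneg hp'l0 hq'l0 hpq
  rw [← hm] at hdip
  omega

end Main

theorem shortest_path_in_quadrants (n : ℕ) (hn : 3 ≤ n) (A : SimpleLineArrangement n)
    (l1 l2 l3 l4 : Set (ℝ × ℝ)) (h1 : l1 ∈ A.lines) (h2 : l2 ∈ A.lines)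
    (h3 : l3 ∈ A.lines) (h4 : l4 ∈ A.lines) (h12 : l1 ≠ l2) (h34 : l3 ≠ l4)
    (hdisj : ({l1, l2} : Set (Set (ℝ × ℝ))) ∩ {l3, l4} = ∅)
    (u v : ℝ × ℝ) (hu : u ∈ l1 ∩ l2) (hv : v ∈ l3 ∩ l4)
    (Qv1 Qv2 Qu3 Qu4 : Set (ℝ × ℝ))
    (hQv1 : IsClosedHalfplaneOf Qv1 l1) (hvQ1 : v ∈ Qv1)
    (hQv2 : IsClosedHalfplaneOf Qv2 l2) (hvQ2 : v ∈ Qv2)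
    (hQu3 : IsClosedHalfplaneOf Qu3 l3) (huQ3 : u ∈ Qu3)
    (hQu4 : IsClosedHalfplaneOf Qu4 l4) (huQ4 : u ∈ Qu4)
    (P : A.graph.Walk u v) (hP : P.IsPath) (hlen : P.length = A.graph.dist u v) :
    ∀ w ∈ P.support, w ∈ (Qu3 ∩ Qu4) ∩ (Qv1 ∩ Qv2) := by
  intro w hw
  have hd13 : l1 ≠ l3 := fun h =>
    Set.eq_empty_iff_forall_notMem.1 hdisj l1 ⟨Or.inl rfl, Or.inl h⟩
  have hd14 : l1 ≠ l4 := fun h =>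
    Set.eq_empty_iff_forall_notMem.1 hdisj l1 ⟨Or.inl rfl, Or.inr h⟩
  have hd23 : l2 ≠ l3 := fun h =>
    Set.eq_empty_iff_forall_notMem.1 hdisj l2 ⟨Or.inr rfl, Or.inl h⟩
  have hd24 : l2 ≠ l4 := fun h =>
    Set.eq_empty_iff_forall_notMem.1 hdisj l2 ⟨Or.inr rfl, Or.inr h⟩
  have hu3 : u ∉ l3 := fun h => by
    rcases A.simple u l1 h1 l2 h2 l3 h3 hu.1 hu.2 h with h' | h' | h'
    exacts [h12 h', hd13 h', hd23 h']
  have hu4 : u ∉ l4 := fun h => by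
    rcases A.simple u l1 h1 l2 h2 l4 h4 hu.1 hu.2 h with h' | h' | h'
    exacts [h12 h', hd14 h', hd24 h']
  have hv1 : v ∉ l1 := fun h => by
    rcases A.simple v l3 h3 l4 h4 l1 h1 hv.1 hv.2 h with h' | h' | h'
    exacts [h34 h', hd13 h'.symm, hd14 h'.symm]
  have hv2 : v ∉ l2 := fun h => by
    rcases A.simple v l3 h3 l4 h4 l2 h2 hv.1 hv.2 h with h' | h' | h'
    exacts [h34 h', hd23 h'.symm, hd24 h'.symm]
  have hmin : ∀ Q : A.graph.Walk u v, P.length ≤ Q.length := fun Q => by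
    rw [hlen]; exact SimpleGraph.dist_le Q
  have hminrev : ∀ Q : A.graph.Walk v u, P.reverse.length ≤ Q.length := fun Q => by
    rw [SimpleGraph.Walk.length_reverse, hlen, SimpleGraph.dist_comm]
    exact SimpleGraph.dist_le Q
  have hwrev : w ∈ P.reverse.support := by
    rwa [SimpleGraph.Walk.support_reverse, List.mem_reverse]
  have key : ∀ (l H : Set (ℝ × ℝ)), l ∈ A.lines → IsClosedHalfplaneOf H l →
      ∀ (p q : ℝ × ℝ) (Q : A.graph.Walk p q), (∀ Q' : A.graph.Walk p q, Q.length ≤ Q'.length) →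
      p ∈ l → q ∉ l → q ∈ H → ∀ z ∈ Q.support, z ∈ H := by
    intro l H hl hH p q Q hQmin hpl hql hqH z hz
    obtain ⟨a, b, c0, hab0, hleq, hcase⟩ := hH
    rcases hcase with hHeq | hHeq
    · have hf0 : ∀ p', p' ∈ l ↔ (fun p' : ℝ × ℝ => (-a) * p'.1 + (-b) * p'.2 + c0) p' = 0 := by
        intro p'
        rw [hleq]
        simp only [Set.mem_setOf_eq]
        constructor <;> intro h <;> linarith
      have hfq : (0:ℝ) < (fun p' : ℝ × ℝ => (-a) * p'.1 + (-b) * p'.2 + c0) q := by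
        have h1 : a * q.1 + b * q.2 ≤ c0 := by rw [hHeq] at hqH; exact hqH
        have h2 : a * q.1 + b * q.2 ≠ c0 := fun h => hql (by rw [hleq]; exact h)
        have := lt_of_le_of_ne h1 h2
        simp only
        linarith
      have hres := SLA.main_halfplane A hl hf0 (affOn_shape (-a) (-b) c0) hpl hfq Q hQmin z hz
      rw [hHeq]
      simp only [Set.mem_setOf_eq] at hres ⊢
      linarith
    · have hf0 : ∀ p', p' ∈ l ↔ (fun p' : ℝ × ℝ => a * p'.1 + b * p'.2 + (-c0)) p' = 0 := by
        intro p'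
        rw [hleq]
        simp only [Set.mem_setOf_eq]
        constructor <;> intro h <;> linarith
      have hfq : (0:ℝ) < (fun p' : ℝ × ℝ => a * p'.1 + b * p'.2 + (-c0)) q := by
        have h1 : c0 ≤ a * q.1 + b * q.2 := by rw [hHeq] at hqH; exact hqH
        have h2 : a * q.1 + b * q.2 ≠ c0 := fun h => hql (by rw [hleq]; exact h)
        have := lt_of_le_of_ne h1 (Ne.symm h2)
        simp only
        linarith
      have hres := SLA.main_halfplane A hl hf0 (affOn_shape a b (-c0)) hpl hfq Q hQmin z hz
      rw [hHeq]
      simp only [Set.mem_setOf_eq] at hres ⊢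
      linarith
  refine ⟨⟨?_, ?_⟩, ?_, ?_⟩
  · exact key l3 Qu3 h3 hQu3 v u P.reverse hminrev hv.1 hu3 huQ3 w hwrev
  · exact key l4 Qu4 h4 hQu4 v u P.reverse hminrev hv.2 hu4 huQ4 w hwrev
  · exact key l1 Qv1 h1 hQv1 u v P hmin hu.1 hv1 hvQ1 w hw
  · exact key l2 Qv2 h2 hQv2 u v P hmin hu.2 hv2 hvQ2 w hw
end

section
/- Let L be a simple line arrangement of n ≥ 3 lines, let l ∈ L, and let u, v be the two extreme vertices on l, i.e., the two vertices of V(L) ∩ l such that every other vertex of V(L) ∩ l lies strictly between u and v on l. Then the graph distance satisfies d(u,v) = n − 2. -/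
/-- Coordinate along a line with equation `a*x + b*y = c`. -/
def phiL (a b : ℝ) (p : ℝ × ℝ) : ℝ := a * p.2 - b * p.1

lemma sq_sum_pos {a b : ℝ} (hab : (a, b) ≠ (0, 0)) : 0 < a ^ 2 + b ^ 2 := by
  have h : a ≠ 0 ∨ b ≠ 0 := by
    by_contra h; push_neg at h; exact hab (by simp [Prod.ext_iff, h.1, h.2])
  rcases h with h | h
  · nlinarith [sq_nonneg b, sq_abs a, abs_pos.2 h]
  · nlinarith [sq_nonneg a, sq_abs b, abs_pos.2 h]

lemma phiL_injOn {a b c : ℝ} (hab : (a, b) ≠ (0, 0)) {p q : ℝ × ℝ}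
    (hp : a * p.1 + b * p.2 = c) (hq : a * q.1 + b * q.2 = c)
    (h : phiL a b p = phiL a b q) : p = q := by
  have hab2 := sq_sum_pos hab
  unfold phiL at h
  have e1 : (a ^ 2 + b ^ 2) * (p.1 - q.1) = 0 := by
    linear_combination a * hp - a * hq - b * h
  have e2 : (a ^ 2 + b ^ 2) * (p.2 - q.2) = 0 := by
    linear_combination b * hp - b * hq + a * h
  have h1 : p.1 = q.1 := by
    have := mul_eq_zero.1 e1
    rcases this with h' | h'
    · exact absurd h' (ne_of_gt hab2)
    · linarith [sub_eq_zero.1 h']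
  have h2 : p.2 = q.2 := by
    have := mul_eq_zero.1 e2
    rcases this with h' | h'
    · exact absurd h' (ne_of_gt hab2)
    · linarith [sub_eq_zero.1 h']
  exact Prod.ext h1 h2

lemma exists_lineMap_coeff {a b c : ℝ} (hab : (a, b) ≠ (0, 0)) {p q w : ℝ × ℝ}
    (hp : a * p.1 + b * p.2 = c) (hq : a * q.1 + b * q.2 = c)
    (hw : a * w.1 + b * w.2 = c) (hpq : p ≠ q) :
    ∃ t : ℝ, w = AffineMap.lineMap p q t := by
  have hX : (w.1 - p.1) * (q.2 - p.2) = (w.2 - p.2) * (q.1 - p.1) := by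
    have h : a ≠ 0 ∨ b ≠ 0 := by
      by_contra h; push_neg at h; exact hab (by simp [Prod.ext_iff, h.1, h.2])
    rcases h with h | h
    · have := mul_left_cancel₀ h (show a * ((w.1 - p.1) * (q.2 - p.2)) =
        a * ((w.2 - p.2) * (q.1 - p.1)) by linear_combination (q.2 - p.2) * hw - (q.2 - p.2) * hp - (w.2 - p.2) * hq + (w.2 - p.2) * hp)
      exact this
    · have := mul_left_cancel₀ h (show b * ((w.1 - p.1) * (q.2 - p.2)) =
        b * ((w.2 - p.2) * (q.1 - p.1)) by linear_combination -(q.1 - p.1) * hw + (q.1 - p.1) * hp + (w.1 - p.1) * hq - (w.1 - p.1) * hp)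
      exact this
  have hd : q.1 - p.1 ≠ 0 ∨ q.2 - p.2 ≠ 0 := by
    by_contra h; push_neg at h
    exact hpq (Prod.ext (by linarith [h.1]) (by linarith [h.2])).symm
  rcases hd with hd | hd
  · refine ⟨(w.1 - p.1) / (q.1 - p.1), ?_⟩
    rw [AffineMap.lineMap_apply_module']
    refine Prod.ext ?_ ?_ <;> simp only [Prod.fst_add, Prod.snd_add, Prod.smul_fst,
      Prod.smul_snd, Prod.fst_sub, Prod.snd_sub, smul_eq_mul]
    · field_simp
      ring
    · field_simp
      linear_combination -hX
  · refine ⟨(w.2 - p.2) / (q.2 - p.2), ?_⟩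
    rw [AffineMap.lineMap_apply_module']
    refine Prod.ext ?_ ?_ <;> simp only [Prod.fst_add, Prod.snd_add, Prod.smul_fst,
      Prod.smul_snd, Prod.fst_sub, Prod.snd_sub, smul_eq_mul]
    · field_simp
      linear_combination hX
    · field_simp
      ring

lemma phiL_lineMap (a b : ℝ) (p q : ℝ × ℝ) (t : ℝ) :
    phiL a b (AffineMap.lineMap p q t) = phiL a b p + t * (phiL a b q - phiL a b p) := by
  rw [AffineMap.lineMap_apply_module']
  simp only [phiL, Prod.fst_add, Prod.snd_add, Prod.smul_fst, Prod.smul_snd,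
    Prod.fst_sub, Prod.snd_sub, smul_eq_mul]
  ring

lemma sbtw_iff_phiL {a b c : ℝ} (hab : (a, b) ≠ (0, 0)) {p q w : ℝ × ℝ}
    (hp : a * p.1 + b * p.2 = c) (hq : a * q.1 + b * q.2 = c)
    (hw : a * w.1 + b * w.2 = c) (hpq : p ≠ q) :
    Sbtw ℝ p w q ↔ ((phiL a b p < phiL a b w ∧ phiL a b w < phiL a b q) ∨
      (phiL a b q < phiL a b w ∧ phiL a b w < phiL a b p)) := by
  obtain ⟨t, ht⟩ := exists_lineMap_coeff hab hp hq hw hpq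
  subst ht
  rw [sbtw_lineMap_iff, phiL_lineMap]
  have hd : phiL a b p ≠ phiL a b q := fun h => hpq (phiL_injOn hab hp hq h)
  rw [and_iff_right hpq]
  rcases hd.lt_or_gt with hlt | hlt
  · constructor
    · rintro ⟨h0, h1⟩; left; constructor <;> nlinarith
    · rintro (⟨h0, h1⟩ | ⟨h0, h1⟩) <;> constructor <;> nlinarith
  · constructor
    · rintro ⟨h0, h1⟩; right; constructor <;> nlinarith
    · rintro (⟨h0, h1⟩ | ⟨h0, h1⟩) <;> constructor <;> nlinarith

lemma segment_subset_line {a b c : ℝ} {p q : ℝ × ℝ}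
    (hp : a * p.1 + b * p.2 = c) (hq : a * q.1 + b * q.2 = c) :
    ∀ z ∈ segment ℝ p q, a * z.1 + b * z.2 = c := by
  rintro z ⟨s, t, hs, ht, hst, rfl⟩
  simp only [Prod.fst_add, Prod.snd_add, Prod.smul_fst, Prod.smul_snd, smul_eq_mul]
  linear_combination s * hp + t * hq + c * hst

/-- IVT for a line and a segment. -/
lemma segment_meets_line {a b c : ℝ} {x y : ℝ × ℝ}
    (hxy : (a * x.1 + b * x.2 - c) * (a * y.1 + b * y.2 - c) ≤ 0) :
    ∃ z ∈ segment ℝ x y, a * z.1 + b * z.2 = c := by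
  set s := a * x.1 + b * x.2 - c with hs
  set t := a * y.1 + b * y.2 - c with ht
  by_cases hst : s = t
  · have hs0 : s = 0 := by nlinarith
    exact ⟨x, left_mem_segment ℝ x y, by linarith [hs0]⟩
  · refine ⟨x + (s / (s - t)) • (y - x), ?_, ?_⟩
    · rw [segment_eq_image']
      refine ⟨s / (s - t), ⟨?_, ?_⟩, rfl⟩
      · rw [div_nonneg_iff]
        rcases le_or_gt s 0 with h | h
        · rcases lt_or_gt_of_ne (sub_ne_zero.2 hst) with h' | h'
          · exact Or.inr ⟨h, le_of_lt h'⟩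
          · have : 0 ≤ s := by nlinarith
            exact Or.inl ⟨this, le_of_lt h'⟩
        · have h2 : t ≤ 0 := by nlinarith
          exact Or.inl ⟨le_of_lt h, by linarith⟩
      · rw [div_le_one_iff]
        rcases lt_trichotomy (s - t) 0 with h' | h' | h'
        · refine Or.inr (Or.inr ⟨h', ?_⟩)
          have : 0 ≤ t := by nlinarith
          linarith
        · exact absurd (sub_eq_zero.1 h') hst
        · refine Or.inl ⟨h', ?_⟩
          have : t ≤ 0 := by nlinarith
          linarith
    · simp only [Prod.fst_add, Prod.snd_add, Prod.smul_fst, Prod.smul_snd,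
        Prod.fst_sub, Prod.snd_sub, smul_eq_mul]
      have h0 : s - t ≠ 0 := sub_ne_zero.2 hst
      field_simp
      linear_combination (s - t) * hs + s * ht - s * hs

lemma segment_same_sign {a b c : ℝ} {x y : ℝ × ℝ}
    (hxy : 0 < (a * x.1 + b * x.2 - c) * (a * y.1 + b * y.2 - c)) :
    ∀ z ∈ segment ℝ x y, a * z.1 + b * z.2 ≠ c := by
  rintro z ⟨s, t, hs, ht, hst, rfl⟩ hz
  simp only [Prod.fst_add, Prod.snd_add, Prod.smul_fst, Prod.smul_snd, smul_eq_mul] at hz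
  set σx := a * x.1 + b * x.2 - c
  set σy := a * y.1 + b * y.2 - c
  have hcomb : s * σx + t * σy = 0 := by
    simp only [σx, σy]; linear_combination hz - c * hst
  rcases eq_or_lt_of_le hs with hs0 | hs0
  · have ht1 : t = 1 := by linarith
    have hy0 : σy = 0 := by
      rw [← hs0, zero_mul, zero_add, ht1, one_mul] at hcomb
      exact hcomb
    rw [hy0, mul_zero] at hxy; exact lt_irrefl 0 hxy
  · rcases lt_trichotomy σx 0 with h | h | h
    · have hy : σy < 0 := by nlinarith
      have h1 : s * σx < 0 := mul_neg_of_pos_of_neg hs0 h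
      have h2 : t * σy ≤ 0 := by nlinarith
      linarith
    · rw [h, zero_mul] at hxy; exact lt_irrefl 0 hxy
    · have hy : 0 < σy := by nlinarith
      have h1 : 0 < s * σx := mul_pos hs0 h
      have h2 : 0 ≤ t * σy := by nlinarith
      linarith

namespace SimpleLineArrangement

variable {n : ℕ}

lemma graph_adj (A : SimpleLineArrangement n) {x y : ℝ × ℝ} :
    A.graph.Adj x y ↔ x ≠ y ∧ x ∈ A.verts ∧ y ∈ A.verts ∧
      ∃ l ∈ A.lines, x ∈ l ∧ y ∈ l ∧ ∀ w ∈ A.verts, w ∈ l → ¬ Sbtw ℝ x w y :=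
  Iff.rfl

lemma second_line (A : SimpleLineArrangement n) {x : ℝ × ℝ} {lam : Set (ℝ × ℝ)}
    (hx : x ∈ A.verts) (hlam : lam ∈ A.lines) (hxlam : x ∈ lam) :
    ∃ m ∈ A.lines, m ≠ lam ∧ x ∈ m := by
  obtain ⟨l₁, h₁, l₂, h₂, hne, hx1, hx2⟩ := hx
  by_cases h : l₁ = lam
  · exact ⟨l₂, h₂, by rw [← h]; exact hne.symm, hx2⟩
  · exact ⟨l₁, h₁, h, hx1⟩

open scoped Classical in
/-- The number of lines of the arrangement "blocking" `x` from `v`. -/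
noncomputable def gcnt (A : SimpleLineArrangement n) (v x : ℝ × ℝ) : ℕ :=
  (A.lines.filter (fun m => v ∉ m ∧ (m ∩ segment ℝ x v).Nonempty)).card

open scoped Classical in
lemma gcnt_self (A : SimpleLineArrangement n) (v : ℝ × ℝ) : A.gcnt v v = 0 := by
  rw [gcnt, Finset.card_eq_zero, Finset.filter_eq_empty_iff]
  rintro m hm ⟨hvm, z, hzm, hzseg⟩
  rw [segment_same] at hzseg
  rw [Set.mem_singleton_iff] at hzseg
  exact hvm (hzseg ▸ hzm)

open scoped Classical in
lemma gcnt_step (A : SimpleLineArrangement n) (v : ℝ × ℝ) {x y : ℝ × ℝ}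
    (h : A.graph.Adj x y) : A.gcnt v x ≤ A.gcnt v y + 1 := by
  obtain ⟨hne, hx, hy, lam, hlam, hxlam, hylam, hbet⟩ := h
  obtain ⟨mx, hmx, hmxne, hxmx⟩ := A.second_line hx hlam hxlam
  have hsub : A.lines.filter (fun m => v ∉ m ∧ (m ∩ segment ℝ x v).Nonempty) ⊆
      insert mx (A.lines.filter (fun m => v ∉ m ∧ (m ∩ segment ℝ y v).Nonempty)) := by
    intro m hm
    rw [Finset.mem_filter] at hm
    obtain ⟨hmA, hvm, z, hzm, hzseg⟩ := hm
    by_cases hmy : (m ∩ segment ℝ y v).Nonempty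
    · exact Finset.mem_insert_of_mem (Finset.mem_filter.2 ⟨hmA, hvm, hmy⟩)
    obtain ⟨am, bm, cm, habm, hmeq⟩ := A.isLine m hmA
    obtain ⟨al, bl, cl, habl, hleq⟩ := A.isLine lam hlam
    have hmem : ∀ p : ℝ × ℝ, p ∈ m ↔ am * p.1 + bm * p.2 = cm := by
      intro p; rw [hmeq]; exact Iff.rfl
    have hσv : am * v.1 + bm * v.2 - cm ≠ 0 := fun h0 => hvm ((hmem v).2 (by linarith))
    have hσz : am * z.1 + bm * z.2 - cm = 0 := by
      have := (hmem z).1 hzm; linarith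
    have hyv : 0 < (am * y.1 + bm * y.2 - cm) * (am * v.1 + bm * v.2 - cm) := by
      rcases lt_trichotomy ((am * y.1 + bm * y.2 - cm) * (am * v.1 + bm * v.2 - cm)) 0
        with h' | h' | h'
      · exfalso
        obtain ⟨z', hz'seg, hz'⟩ := segment_meets_line (le_of_lt h')
        exact hmy ⟨z', (hmem z').2 hz', hz'seg⟩
      · exfalso
        rcases mul_eq_zero.1 h' with h0 | h0
        · exact hmy ⟨y, (hmem y).2 (by linarith), left_mem_segment ℝ y v⟩
        · exact hσv h0
      · exact h'
    have hσy : am * y.1 + bm * y.2 - cm ≠ 0 := by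
      intro h0; rw [h0, zero_mul] at hyv; exact lt_irrefl 0 hyv
    have hxm : x ∈ m := by
      by_contra hxm
      have hσx : am * x.1 + bm * x.2 - cm ≠ 0 := fun h0 => hxm ((hmem x).2 (by linarith))
      have hxv : (am * x.1 + bm * x.2 - cm) * (am * v.1 + bm * v.2 - cm) < 0 := by
        rcases lt_trichotomy ((am * x.1 + bm * x.2 - cm) * (am * v.1 + bm * v.2 - cm)) 0
          with h' | h' | h'
        · exact h'
        · exfalso
          rcases mul_eq_zero.1 h' with h0 | h0
          · exact hσx h0
          · exact hσv h0
        · exact absurd ((hmem z).1 hzm) (segment_same_sign h' z hzseg)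
      have hxy' : (am * x.1 + bm * x.2 - cm) * (am * y.1 + bm * y.2 - cm) < 0 := by
        nlinarith [sq_nonneg (am * v.1 + bm * v.2 - cm)]
      obtain ⟨z', hz'seg, hz'⟩ := segment_meets_line (le_of_lt hxy')
      have hxl' : al * x.1 + bl * x.2 = cl := by
        have := hxlam; rw [hleq] at this; exact this
      have hyl' : al * y.1 + bl * y.2 = cl := by
        have := hylam; rw [hleq] at this; exact this
      have hz'lam : z' ∈ lam := by
        rw [hleq]; exact segment_subset_line hxl' hyl' z' hz'seg
      have hmlam : m ≠ lam := fun hh => hxm (hh ▸ hxlam)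
      have hz'verts : z' ∈ A.verts := ⟨m, hmA, lam, hlam, hmlam, (hmem z').2 hz', hz'lam⟩
      have hz'x : z' ≠ x := by
        intro hh; rw [hh] at hz'; exact hσx (by linarith)
      have hz'y : z' ≠ y := by
        intro hh; rw [hh] at hz'; exact hσy (by linarith)
      exact hbet z' hz'verts hz'lam ⟨mem_segment_iff_wbtw.1 hz'seg, hz'x, hz'y⟩
    have hmlam : m ≠ lam := by
      intro hh
      have : y ∈ m := hh ▸ hylam
      exact hσy (by have := (hmem y).1 this; linarith)
    have hmmx : m = mx := by
      rcases A.simple x m hmA mx hmx lam hlam hxm hxmx hxlam with h' | h' | h'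
      · exact h'
      · exact absurd h' hmlam
      · exact absurd h' hmxne
    rw [hmmx]
    exact Finset.mem_insert_self mx _
  calc A.gcnt v x ≤ (insert mx (A.lines.filter
          (fun m => v ∉ m ∧ (m ∩ segment ℝ y v).Nonempty))).card := Finset.card_le_card hsub
    _ ≤ A.gcnt v y + 1 := by rw [gcnt]; exact Finset.card_insert_le _ _

lemma gcnt_le_walk (A : SimpleLineArrangement n) (v : ℝ × ℝ) :
    ∀ {x : ℝ × ℝ} (w : A.graph.Walk x v), A.gcnt v x ≤ w.length := by
  intro x w
  induction w with
  | nil => rw [A.gcnt_self]; exact Nat.zero_le _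
  | cons h p ih =>
    rw [SimpleGraph.Walk.length_cons]
    exact le_trans (A.gcnt_step _ h) (Nat.add_le_add_right ih 1)

open scoped Classical in
lemma gcnt_extreme (A : SimpleLineArrangement n) {l : Set (ℝ × ℝ)} (hl : l ∈ A.lines)
    {u v : ℝ × ℝ} (hu : u ∈ A.verts) (hul : u ∈ l) (hv : v ∈ A.verts) (hvl : v ∈ l)
    (huv : u ≠ v)
    (hext : ∀ w ∈ A.verts ∩ l, w ≠ u → w ≠ v → Sbtw ℝ u w v) :
    A.gcnt v u = n - 2 := by
  obtain ⟨lv, hlv, hlvne, hvlv⟩ := A.second_line hv hl hvl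
  have key : A.lines.filter (fun m => v ∉ m ∧ (m ∩ segment ℝ u v).Nonempty) =
      (A.lines.erase l).erase lv := by
    ext m
    rw [Finset.mem_filter, Finset.mem_erase, Finset.mem_erase]
    constructor
    · rintro ⟨hmA, hvm, -⟩
      exact ⟨fun hh => hvm (hh ▸ hvlv), fun hh => hvm (hh ▸ hvl), hmA⟩
    · rintro ⟨hmlv, hml, hmA⟩
      have hvm : v ∉ m := by
        intro hvm
        rcases A.simple v m hmA l hl lv hlv hvm hvl hvlv with h' | h' | h'
        · exact hml h'
        · exact hmlv h'
        · exact hlvne h'.symm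
      refine ⟨hmA, hvm, ?_⟩
      by_cases hum : u ∈ m
      · exact ⟨u, hum, left_mem_segment ℝ u v⟩
      · obtain ⟨p, ⟨hpm, hpl⟩, -⟩ := A.meet m hmA l hl hml
        have hpverts : p ∈ A.verts := ⟨m, hmA, l, hl, hml, hpm, hpl⟩
        have hpu : p ≠ u := fun hh => hum (hh ▸ hpm)
        have hpv : p ≠ v := fun hh => hvm (hh ▸ hpm)
        have hsb := hext p ⟨hpverts, hpl⟩ hpu hpv
        exact ⟨p, hpm, hsb.wbtw.mem_segment⟩
  rw [gcnt, key, Finset.card_erase_of_mem (Finset.mem_erase.2 ⟨hlvne, hlv⟩),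
    Finset.card_erase_of_mem hl, A.card_lines]
  omega

lemma adj_of_no_between (A : SimpleLineArrangement n) {l : Set (ℝ × ℝ)} (hl : l ∈ A.lines)
    {a b c : ℝ} (hab : (a, b) ≠ (0, 0)) (hleq : l = {p : ℝ × ℝ | a * p.1 + b * p.2 = c})
    {x y : ℝ × ℝ} (hx : x ∈ A.verts ∩ l) (hy : y ∈ A.verts ∩ l)
    (hxy : phiL a b x < phiL a b y)
    (hemp : {z | z ∈ A.verts ∩ l ∧ phiL a b x < phiL a b z ∧ phiL a b z < phiL a b y} = ∅) :
    A.graph.Adj x y := by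
  have hxl : a * x.1 + b * x.2 = c := by have := hx.2; rw [hleq] at this; exact this
  have hyl : a * y.1 + b * y.2 = c := by have := hy.2; rw [hleq] at this; exact this
  have hne : x ≠ y := fun h => by rw [h] at hxy; exact lt_irrefl _ hxy
  refine ⟨hne, hx.1, hy.1, l, hl, hx.2, hy.2, ?_⟩
  intro w hw hwl hsbtw
  have hwl' : a * w.1 + b * w.2 = c := by rw [hleq] at hwl; exact hwl
  rw [sbtw_iff_phiL hab hxl hyl hwl' hne] at hsbtw
  rcases hsbtw with ⟨h1, h2⟩ | ⟨h1, h2⟩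
  · exact Set.eq_empty_iff_forall_notMem.1 hemp w ⟨⟨hw, hwl⟩, h1, h2⟩
  · linarith

lemma exists_short_walk (A : SimpleLineArrangement n) {l : Set (ℝ × ℝ)} (hl : l ∈ A.lines)
    {a b c : ℝ} (hab : (a, b) ≠ (0, 0)) (hleq : l = {p : ℝ × ℝ | a * p.1 + b * p.2 = c})
    (hPfin : (A.verts ∩ l).Finite) :
    ∀ k : ℕ, ∀ x y : ℝ × ℝ, x ∈ A.verts ∩ l → y ∈ A.verts ∩ l →
      phiL a b x < phiL a b y →
      {z | z ∈ A.verts ∩ l ∧ phiL a b x < phiL a b z ∧ phiL a b z < phiL a b y}.ncard ≤ k →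
      ∃ w : A.graph.Walk x y, w.length ≤ k + 1 := by
  intro k
  induction k with
  | zero =>
    intro x y hx hy hxy hcard
    have hfin : {z | z ∈ A.verts ∩ l ∧ phiL a b x < phiL a b z ∧
        phiL a b z < phiL a b y}.Finite :=
      hPfin.subset (fun z hz => hz.1)
    have hemp := (Set.ncard_eq_zero hfin).1 (Nat.le_zero.1 hcard)
    exact ⟨(A.adj_of_no_between hl hab hleq hx hy hxy hemp).toWalk, by simp⟩
  | succ k ih =>
    intro x y hx hy hxy hcard
    set S := {z | z ∈ A.verts ∩ l ∧ phiL a b x < phiL a b z ∧ phiL a b z < phiL a b y}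
      with hS
    have hfin : S.Finite := hPfin.subset (fun z hz => hz.1)
    by_cases hemp : S = ∅
    · exact ⟨(A.adj_of_no_between hl hab hleq hx hy hxy hemp).toWalk, by simp⟩
    · obtain ⟨z, hzS, hzmin⟩ := Set.exists_min_image S (phiL a b) hfin
        (Set.nonempty_iff_ne_empty.2 hemp)
      have hadj : A.graph.Adj x z := by
        refine A.adj_of_no_between hl hab hleq hx hzS.1 hzS.2.1 ?_
        rw [Set.eq_empty_iff_forall_notMem]
        rintro w ⟨hw, hw1, hw2⟩
        have hwS : w ∈ S := ⟨hw, hw1, lt_trans hw2 hzS.2.2⟩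
        exact absurd (hzmin w hwS) (not_le.2 hw2)
      have hsub : {w | w ∈ A.verts ∩ l ∧ phiL a b z < phiL a b w ∧ phiL a b w < phiL a b y}
          ⊆ S \ {z} := by
        rintro w ⟨hw, hw1, hw2⟩
        refine ⟨⟨hw, lt_trans hzS.2.1 hw1, hw2⟩, ?_⟩
        rw [Set.mem_singleton_iff]
        intro hh; rw [hh] at hw1; exact lt_irrefl _ hw1
      have hcard' : {w | w ∈ A.verts ∩ l ∧ phiL a b z < phiL a b w ∧
          phiL a b w < phiL a b y}.ncard ≤ k := by
        have h1 : (S \ {z}).ncard = S.ncard - 1 :=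
          Set.ncard_diff_singleton_of_mem hzS
        have h2 := Set.ncard_le_ncard hsub (hfin.diff)
        omega
      obtain ⟨w', hw'⟩ := ih z y hzS.1 hy hzS.2.2 hcard'
      exact ⟨SimpleGraph.Walk.cons hadj w', by
        rw [SimpleGraph.Walk.length_cons]; omega⟩

end SimpleLineArrangement

theorem dist_of_extreme_vertices_on_line (n : ℕ) (hn : 3 ≤ n)
    (A : SimpleLineArrangement n) (l : Set (ℝ × ℝ)) (hl : l ∈ A.lines)
    (u v : ℝ × ℝ) (hu : u ∈ A.verts ∩ l) (hv : v ∈ A.verts ∩ l) (huv : u ≠ v)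
    (hext : ∀ w ∈ A.verts ∩ l, w ≠ u → w ≠ v → Sbtw ℝ u w v) :
    A.graph.dist u v = n - 2 := by
  classical
  obtain ⟨a, b, c, hab, hleq⟩ := A.isLine l hl
  have hul' : a * u.1 + b * u.2 = c := by have := hu.2; rw [hleq] at this; exact this
  have hvl' : a * v.1 + b * v.2 = c := by have := hv.2; rw [hleq] at this; exact this
  -- finiteness and cardinality bound for the vertices on l
  set f : ℝ × ℝ → Set (ℝ × ℝ) :=
    fun z => if h : ∃ m, m ∈ A.lines ∧ m ≠ l ∧ z ∈ m then h.choose else ∅ with hf_def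
  have hf : ∀ z ∈ A.verts ∩ l, f z ∈ A.lines ∧ f z ≠ l ∧ z ∈ f z := by
    intro z hz
    obtain ⟨m, hm, hmne, hzm⟩ := A.second_line hz.1 hl hz.2
    have hex : ∃ m, m ∈ A.lines ∧ m ≠ l ∧ z ∈ m := ⟨m, hm, hmne, hzm⟩
    simp only [hf_def, dif_pos hex]
    exact hex.choose_spec
  have hinj : Set.InjOn f (A.verts ∩ l) := by
    intro z hz z' hz' hzz
    obtain ⟨h1, h2, h3⟩ := hf z hz
    obtain ⟨h1', h2', h3'⟩ := hf z' hz'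
    obtain ⟨p, -, hpuniq⟩ := A.meet (f z) h1 l hl h2
    have e1 := hpuniq z ⟨h3, hz.2⟩
    have e2 := hpuniq z' ⟨by rw [hzz]; exact h3', hz'.2⟩
    rw [e1, e2]
  have himfin : (f '' (A.verts ∩ l)).Finite :=
    (A.lines.finite_toSet).subset (by rintro s ⟨z, hz, rfl⟩; exact (hf z hz).1)
  have hPfin : (A.verts ∩ l).Finite := Set.Finite.of_finite_image himfin hinj
  have hPcard : (A.verts ∩ l).ncard ≤ n - 1 := by
    have h1 : (A.verts ∩ l).ncard ≤ (↑(A.lines.erase l) : Set (Set (ℝ × ℝ))).ncard := by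
      apply Set.ncard_le_ncard_of_injOn f
      · intro z hz
        obtain ⟨h1, h2, -⟩ := hf z hz
        simp only [Finset.coe_erase, Set.mem_diff, Set.mem_singleton_iff]
        exact ⟨h1, h2⟩
      · exact hinj
    rw [Set.ncard_coe_finset, Finset.card_erase_of_mem hl, A.card_lines] at h1
    exact h1
  -- a short walk from u to v
  have hφne : phiL a b u ≠ phiL a b v := fun h => huv (phiL_injOn hab hul' hvl' h)
  have hbound : ∀ x y : ℝ × ℝ, x ∈ A.verts ∩ l → y ∈ A.verts ∩ l →
      ({u, v} : Set (ℝ × ℝ)) = {x, y} →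
      {z | z ∈ A.verts ∩ l ∧ phiL a b x < phiL a b z ∧ phiL a b z < phiL a b y}.ncard
        ≤ n - 3 := by
    intro x y hx hy hxy
    have hsub : {z | z ∈ A.verts ∩ l ∧ phiL a b x < phiL a b z ∧ phiL a b z < phiL a b y}
        ⊆ (A.verts ∩ l) \ {u, v} := by
      rintro z ⟨hz, hz1, hz2⟩
      refine ⟨hz, ?_⟩
      have hzx : z ≠ x := fun hh => by rw [hh] at hz1; exact lt_irrefl _ hz1
      have hzy : z ≠ y := fun hh => by rw [hh] at hz2; exact lt_irrefl _ hz2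
      intro hzuv
      have : z ∈ ({x, y} : Set (ℝ × ℝ)) := hxy ▸ hzuv
      rcases this with h' | h'
      · exact hzx h'
      · exact hzy h'
    have hsubUV : ({u, v} : Set (ℝ × ℝ)) ⊆ A.verts ∩ l := by
      rintro z (rfl | rfl)
      · exact hu
      · exact hv
    have h2 : ((A.verts ∩ l) \ {u, v}).ncard = (A.verts ∩ l).ncard - 2 := by
      rw [Set.ncard_diff hsubUV, Set.ncard_pair huv]
    have h3 := Set.ncard_le_ncard hsub (hPfin.diff)
    omega
  have hwalk : ∃ w : A.graph.Walk u v, w.length ≤ n - 2 := by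
    rcases hφne.lt_or_gt with hlt | hlt
    · obtain ⟨w, hw⟩ := A.exists_short_walk hl hab hleq hPfin (n - 3) u v hu hv hlt
        (hbound u v hu hv rfl)
      exact ⟨w, by omega⟩
    · obtain ⟨w, hw⟩ := A.exists_short_walk hl hab hleq hPfin (n - 3) v u hv hu hlt
        (hbound v u hv hu (Set.pair_comm u v))
      exact ⟨w.reverse, by rw [SimpleGraph.Walk.length_reverse]; omega⟩
  obtain ⟨w, hw⟩ := hwalk
  have hub : A.graph.dist u v ≤ n - 2 := le_trans (SimpleGraph.dist_le w) hw
  have hreach : A.graph.Reachable u v := ⟨w⟩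
  obtain ⟨p, hp⟩ := hreach.exists_walk_length_eq_dist
  have hlb := A.gcnt_le_walk v p
  rw [hp] at hlb
  rw [A.gcnt_extreme hl hu.1 hu.2 hv.1 hv.2 huv hext] at hlb
  omega
end
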